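/- Let G be a finite simple graph of diameter 2. Suppose that for every pair of non-adjacent vertices u, v of G, the subgraph induced by Ecc_G(u) ∩ Ecc_G(v) is a disjoint union of complete graphs each on at least two vertices, such that every neighbor outside Ecc_G(u) ∩ Ecc_G(v) of each vertex of these complete subgraphs belongs to N_G(u) ∩ N_G(v). Suppose moreover that it is not the case that G is a 2-SC graph containing a diametrical pair u, v together with vertices u' ∈ N_G(u) \ N_G(v) and v' ∈ N_G(v) \ N_G(u) satisfying N_G(u) ∩ N_G(v) ⊆ Ecc_G(u') ∩ Ecc_G(v'). Then θ_3(G) = 4. -/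

import Mathlib

set_option linter.unusedSectionVars false
set_option maxHeartbeats 1000000


namespace AscPaper

open SimpleGraph

/-- The eccentricity of a vertex `u` in a graph `G`, as an extended natural number:
the supremum of distances from `u` to all vertices. -/
noncomputable def ecc {V : Type*} (G : SimpleGraph V) (u : V) : ℕ∞ :=
  ⨆ v, G.edist u v

/-- The radius of a graph: the minimum eccentricity over all vertices. -/
noncomputable def graphRadius {V : Type*} (G : SimpleGraph V) : ℕ∞ :=
  ⨅ u, ecc G u

/-- The diameter of a graph: the maximum eccentricity over all vertices. -/
noncomputable def graphDiam {V : Type*} (G : SimpleGraph V) : ℕ∞ :=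
  ⨆ u, ecc G u

/-- The eccentric set of `u`: all vertices at distance exactly `ecc G u` from `u`. -/
def eccSet {V : Type*} (G : SimpleGraph V) (u : V) : Set V :=
  {v | G.edist u v = ecc G u}

/-- `H` is an `r`-ASC (almost self-centered) graph: `H` is connected, has radius `r`,
and all but exactly two vertices are central (have eccentricity equal to the radius). -/
def IsASC {V : Type*} (r : ℕ) (H : SimpleGraph V) : Prop :=
  H.Connected ∧ graphRadius H = (r : ℕ∞) ∧
    {u : V | ecc H u ≠ graphRadius H}.ncard = 2

/-- The `r`-ASC index of a graph `G`: the minimum number `k` of vertices that need to be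
added to `G` so that the resulting graph is an `r`-ASC graph containing `G` as an
induced subgraph. -/
noncomputable def theta {V : Type*} (r : ℕ) (G : SimpleGraph V) : ℕ :=
  sInf {k : ℕ | ∃ H : SimpleGraph (V ⊕ Fin k), IsASC r H ∧
    ∀ u v : V, H.Adj (Sum.inl u) (Sum.inl v) ↔ G.Adj u v}

/-- The hypothesis of the paper's Theorem on 2-SC graphs: `G` is a 2-SC graph (every
vertex has eccentricity 2) containing a diametrical pair `u, v` together with vertices
`u' ∈ N(u) \ N(v)` and `v' ∈ N(v) \ N(u)` such that
`N(u) ∩ N(v) ⊆ Ecc(u') ∩ Ecc(v')`. -/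
def NewAddedHyp {V : Type*} (G : SimpleGraph V) : Prop :=
  (∀ u, ecc G u = 2) ∧
  ∃ u v u' v' : V, G.edist u v = graphDiam G ∧
    u' ∈ G.neighborSet u \ G.neighborSet v ∧
    v' ∈ G.neighborSet v \ G.neighborSet u ∧
    G.neighborSet u ∩ G.neighborSet v ⊆ eccSet G u' ∩ eccSet G v'

open Sum

section helpers
variable {W : Type*} {H : SimpleGraph W} {u v m : W}

lemma edist_le_ecc' (H : SimpleGraph W) (u v : W) : H.edist u v ≤ (⨆ w, H.edist u w) := le_iSup _ v

lemma enat_two_le {e : ℕ∞} (h0 : e ≠ 0) (h1 : e ≠ 1) : 2 ≤ e := by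
  rcases e with _ | n
  · exact le_top
  · have : 1 < (n : ℕ∞) := lt_of_le_of_ne (Order.one_le_iff_pos.mpr (pos_iff_ne_zero.mpr h0)) (Ne.symm h1)
    exact Order.add_one_le_of_lt this

lemma exists_mid_of_edist_le_two (h : H.edist u v ≤ 2) :
    u = v ∨ H.Adj u v ∨ ∃ m, H.Adj u m ∧ H.Adj m v := by
  have hne : H.edist u v ≠ ⊤ := by
    intro he; rw [he] at h; exact absurd h (by norm_num)
  obtain ⟨p, hp⟩ := exists_walk_of_edist_ne_top hne
  have hlen : p.length ≤ 2 := by exact_mod_cast hp ▸ h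
  cases p with
  | nil => exact Or.inl rfl
  | cons hadj q =>
    cases q with
    | nil => exact Or.inr (Or.inl hadj)
    | cons hadj2 r =>
      cases r with
      | nil => exact Or.inr (Or.inr ⟨_, hadj, hadj2⟩)
      | cons hadj3 s => simp [SimpleGraph.Walk.length_cons] at hlen
end helpers

section cert
variable {W : Type*} {H : SimpleGraph W}

lemma walk_le_of_mono (d : W → ℕ) (mono : ∀ x y, H.Adj x y → d y ≤ d x + 1) :
    ∀ {x y : W} (p : H.Walk x y), d y ≤ d x + p.length := by
  intro x y p
  induction p with
  | nil => simp
  | cons hadj q ih =>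
    simp only [SimpleGraph.Walk.length_cons]
    have := mono _ _ hadj
    omega

lemma edist_eq_of_cert (s : W) (d : W → ℕ) (h0 : d s = 0)
    (mono : ∀ x y, H.Adj x y → d y ≤ d x + 1)
    (desc : ∀ x, x ≠ s → ∃ y, H.Adj x y ∧ d y < d x) :
    ∀ x, H.edist s x = d x := by
  have ub : ∀ n (x : W), d x = n → H.edist s x ≤ d x := by
    intro n
    induction n using Nat.strong_induction_on with
    | _ n ih =>
      intro x hdx
      by_cases hxs : x = s
      · subst hxs; simp
      obtain ⟨y, hady, hlt⟩ := desc x hxs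
      have h1 : H.edist s y ≤ d y := ih (d y) (hdx ▸ hlt) y rfl
      calc H.edist s x ≤ H.edist s y + H.edist y x := H.edist_triangle
        _ ≤ (d y : ℕ∞) + 1 := by
            gcongr
            exact le_of_eq (edist_eq_one_iff_adj.mpr hady.symm)
        _ ≤ (d x : ℕ∞) := by exact_mod_cast hlt
  intro x
  refine le_antisymm (ub (d x) x rfl) ?_
  by_cases htop : H.edist s x = ⊤
  · exfalso
    have := ub (d x) x rfl
    rw [htop] at this
    exact absurd (top_le_iff.mp this) (by simp)
  obtain ⟨p, hp⟩ := exists_walk_of_edist_ne_top htop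
  have := walk_le_of_mono d mono p
  rw [h0, zero_add] at this
  rw [← hp]
  exact_mod_cast this
end cert

section upper
variable {V : Type*} [Fintype V] (G : SimpleGraph V)

def Sset (u v : V) : Set V := {x | G.edist u x = 2 ∧ G.edist v x = 2}

def H4 (u v : V) : SimpleGraph (V ⊕ Fin 4) := SimpleGraph.fromRel (fun w w' =>
  match w, w' with
  | Sum.inl x, Sum.inl y => G.Adj x y
  | Sum.inl x, Sum.inr i => (i = 0 ∧ x = u) ∨ (i = 1 ∧ x = u) ∨ (i = 3 ∧ (x = v ∨ x ∈ Sset G u v))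
  | Sum.inr _, Sum.inl _ => False
  | Sum.inr i, Sum.inr j => (i = 1 ∧ j = 2) ∨ (i = 2 ∧ j = 3))

variable {G}

lemma h4_adj_inl_inl {u v x y : V} : (H4 G u v).Adj (inl x) (inl y) ↔ G.Adj x y := by
  simp only [H4, SimpleGraph.fromRel_adj]
  constructor
  · rintro ⟨-, h | h⟩
    · exact h
    · exact h.symm
  · intro h
    exact ⟨by simp [h.ne], Or.inl h⟩

lemma h4_adj_inl_inr {u v x : V} {i : Fin 4} : (H4 G u v).Adj (inl x) (inr i) ↔
    ((i = 0 ∧ x = u) ∨ (i = 1 ∧ x = u) ∨ (i = 3 ∧ (x = v ∨ x ∈ Sset G u v))) := by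
  simp only [H4, SimpleGraph.fromRel_adj]
  constructor
  · rintro ⟨-, h | h⟩
    · exact h
    · exact h.elim
  · intro h
    exact ⟨by simp, Or.inl h⟩

lemma h4_adj_inr_inl {u v x : V} {i : Fin 4} : (H4 G u v).Adj (inr i) (inl x) ↔
    ((i = 0 ∧ x = u) ∨ (i = 1 ∧ x = u) ∨ (i = 3 ∧ (x = v ∨ x ∈ Sset G u v))) := by
  rw [adj_comm]; exact h4_adj_inl_inr

lemma h4_adj_inr_inr {u v : V} {i j : Fin 4} : (H4 G u v).Adj (inr i) (inr j) ↔
    ((i = 1 ∧ j = 2) ∨ (i = 2 ∧ j = 3) ∨ (j = 1 ∧ i = 2) ∨ (j = 2 ∧ i = 3)) := by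
  simp only [H4, SimpleGraph.fromRel_adj]
  constructor
  · rintro ⟨-, h | h⟩ <;> tauto
  · intro h
    constructor
    · rcases h with ⟨h1,h2⟩|⟨h1,h2⟩|⟨h1,h2⟩|⟨h1,h2⟩ <;> subst h1 <;> subst h2 <;> simp
    · tauto
end upper
end AscPaper

namespace AscPaper
end AscPaper
namespace AscPaper
open SimpleGraph Sum

section upper2
variable {V : Type*} [Fintype V]

open Classical in
noncomputable def dp (G : SimpleGraph V) (u : V) : V ⊕ Fin 4 → ℕ
  | inl x => if x = u then 1 else if G.Adj u x then 2 else 3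
  | inr i => ![0, 2, 3, 4] i

open Classical in
noncomputable def da (G : SimpleGraph V) (u : V) : V ⊕ Fin 4 → ℕ
  | inl x => if x = u then 1 else if G.Adj u x then 2 else 3
  | inr i => ![2, 0, 1, 2] i

open Classical in
noncomputable def db (G : SimpleGraph V) (u v : V) : V ⊕ Fin 4 → ℕ
  | inl x => if x = u ∨ x = v ∨ x ∈ Sset G u v then 2 else 3
  | inr i => ![3, 1, 0, 1] i

open Classical in
noncomputable def dc (G : SimpleGraph V) (u v : V) : V ⊕ Fin 4 → ℕ
  | inl x => if x = v ∨ x ∈ Sset G u v then 1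
      else if G.Adj v x ∨ (∃ s ∈ Sset G u v, G.Adj s x) then 2 else 3
  | inr i => ![4, 2, 1, 0] i

variable {G : SimpleGraph V} {u v : V}

lemma dpV_le3 (z : V) : dp G u (inl z) ≤ 3 := by
  simp only [dp]; split_ifs <;> omega

lemma dpV_ge2 {x : V} (hx : x ≠ u) : 2 ≤ dp G u (inl x) := by
  simp only [dp, if_neg hx]; split_ifs <;> omega

lemma dbV_le3 (z : V) : db G u v (inl z) ≤ 3 := by
  simp only [db]; split_ifs <;> omega

lemma dbV_ge2 (z : V) : 2 ≤ db G u v (inl z) := by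
  simp only [db]; split_ifs <;> omega

lemma dcV_le3 (z : V) : dc G u v (inl z) ≤ 3 := by
  simp only [dc]; split_ifs <;> omega

section ctx
variable (huv : G.edist u v = 2) (hle2 : ∀ x y : V, G.edist x y ≤ 2)

include huv

lemma hne_uv : u ≠ v := by
  intro h; rw [h, edist_self] at huv; exact absurd huv.symm (by norm_num)

lemma hnadj_uv : ¬ G.Adj u v := by
  intro h; rw [edist_eq_one_iff_adj.mpr h] at huv; exact absurd huv (by norm_num)

omit huv

lemma S_spec {x : V} (hx : x ∈ Sset G u v) :
    x ≠ u ∧ ¬G.Adj u x ∧ x ≠ v ∧ ¬G.Adj v x := by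
  obtain ⟨h1, h2⟩ := hx
  refine ⟨?_, ?_, ?_, ?_⟩
  · intro h; rw [h, edist_self] at h1; exact absurd h1.symm (by norm_num)
  · intro h; rw [edist_eq_one_iff_adj.mpr h] at h1; exact absurd h1 (by norm_num)
  · intro h; rw [h, edist_self] at h2; exact absurd h2.symm (by norm_num)
  · intro h; rw [edist_eq_one_iff_adj.mpr h] at h2; exact absurd h2 (by norm_num)

include hle2

lemma mk_edist_two {x y : V} (h1 : x ≠ y) (h2 : ¬G.Adj x y) : G.edist x y = 2 := by
  refine le_antisymm (hle2 x y) (enat_two_le ?_ ?_)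
  · simp [h1]
  · simp [h2]

lemma mk_S {x : V} (h1 : x ≠ u) (h2 : ¬G.Adj u x) (h3 : x ≠ v) (h4 : ¬G.Adj v x) :
    x ∈ Sset G u v :=
  ⟨mk_edist_two hle2 (Ne.symm h1) h2, mk_edist_two hle2 (Ne.symm h3) h4⟩

lemma Gmid {x y : V} (h1 : x ≠ y) (h2 : ¬G.Adj x y) : ∃ m, G.Adj x m ∧ G.Adj m y := by
  rcases exists_mid_of_edist_le_two (hle2 x y) with h | h | h
  · exact absurd h h1
  · exact absurd h h2
  · exact h

end ctx
end upper2
end AscPaper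

namespace AscPaper
open SimpleGraph Sum
section upper3
variable {V : Type*} [Fintype V] {G : SimpleGraph V} {u v : V}

lemma adj_p_u : (H4 G u v).Adj (inr 0) (inl u) := h4_adj_inr_inl.mpr (Or.inl ⟨rfl, rfl⟩)
lemma adj_a_u : (H4 G u v).Adj (inr 1) (inl u) := h4_adj_inr_inl.mpr (Or.inr (Or.inl ⟨rfl, rfl⟩))
lemma adj_c_v : (H4 G u v).Adj (inr 3) (inl v) := h4_adj_inr_inl.mpr (Or.inr (Or.inr ⟨rfl, Or.inl rfl⟩))
lemma adj_c_S {x : V} (hx : x ∈ Sset G u v) : (H4 G u v).Adj (inr 3) (inl x) :=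
  h4_adj_inr_inl.mpr (Or.inr (Or.inr ⟨rfl, Or.inr hx⟩))
lemma adj_a_b : (H4 G u v).Adj (inr 1) (inr 2) := h4_adj_inr_inr.mpr (Or.inl ⟨rfl, rfl⟩)
lemma adj_b_c : (H4 G u v).Adj (inr 2) (inr 3) := h4_adj_inr_inr.mpr (Or.inr (Or.inl ⟨rfl, rfl⟩))

lemma dp_u : dp G u (inl u) = 1 := by simp [dp]
lemma dp_adj {x : V} (h : G.Adj u x) : dp G u (inl x) = 2 := by simp [dp, h.ne', h]
lemma dp_far {x : V} (h1 : x ≠ u) (h2 : ¬G.Adj u x) : dp G u (inl x) = 3 := by simp [dp, h1, h2]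
lemma da_u : da G u (inl u) = 1 := by simp [da]
lemma da_adj {x : V} (h : G.Adj u x) : da G u (inl x) = 2 := by simp [da, h.ne', h]
lemma da_far {x : V} (h1 : x ≠ u) (h2 : ¬G.Adj u x) : da G u (inl x) = 3 := by simp [da, h1, h2]
lemma daV_le3 (z : V) : da G u (inl z) ≤ 3 := by simp only [da]; split_ifs <;> omega
lemma daV_ge1 (z : V) : 1 ≤ da G u (inl z) := by simp only [da]; split_ifs <;> omega
lemma db_near {x : V} (h : x = u ∨ x = v ∨ x ∈ Sset G u v) : db G u v (inl x) = 2 := by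
  simp only [db, if_pos h]
lemma db_far {x : V} (h : ¬(x = u ∨ x = v ∨ x ∈ Sset G u v)) : db G u v (inl x) = 3 := by
  simp only [db, if_neg h]
lemma dc_one {x : V} (h : x = v ∨ x ∈ Sset G u v) : dc G u v (inl x) = 1 := by
  simp only [dc, if_pos h]
lemma dc_le2 {x : V} (h : G.Adj v x ∨ ∃ s ∈ Sset G u v, G.Adj s x) : dc G u v (inl x) ≤ 2 := by
  simp only [dc]; split_ifs <;> omega
lemma dc_ge1 (z : V) : 1 ≤ dc G u v (inl z) := by simp only [dc]; split_ifs <;> omega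
lemma dc_far {x : V} (h1 : ¬(x = v ∨ x ∈ Sset G u v))
    (h2 : ¬(G.Adj v x ∨ ∃ s ∈ Sset G u v, G.Adj s x)) : dc G u v (inl x) = 3 := by
  simp only [dc, if_neg h1, if_neg h2]

variable (huv : G.edist u v = 2) (hle2 : ∀ x y : V, G.edist x y ≤ 2)
include huv hle2

lemma dp_v : dp G u (inl v) = 3 := dp_far (hne_uv huv).symm (hnadj_uv huv)
lemma dp_S {x : V} (hx : x ∈ Sset G u v) : dp G u (inl x) = 3 :=
  dp_far (S_spec hx).1 (S_spec hx).2.1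

lemma edist_p : ∀ w, (H4 G u v).edist (inr 0) w = dp G u w := by
  apply edist_eq_of_cert
  · rfl
  · rintro (x | i) (y | j) h
    · have hG := h4_adj_inl_inl.mp h
      by_cases hx : x = u
      · have h1 : dp G u (inl y) = 2 := dp_adj (hx ▸ hG)
        have h2 : dp G u (inl x) = 1 := by rw [hx, dp_u]
        omega
      · have := dpV_le3 (G := G) (u := u) y
        have := dpV_ge2 (G := G) hx
        omega
    · rcases h4_adj_inl_inr.mp h with ⟨hi, hx⟩ | ⟨hi, hx⟩ | ⟨hi, hx⟩ <;> subst hi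
      · show (0:ℕ) ≤ _ + 1; omega
      · have h2 : dp G u (inl x) = 1 := by rw [hx, dp_u]
        show (2:ℕ) ≤ _ + 1; omega
      · have h3 : dp G u (inl x) = 3 := by
          rcases hx with rfl | hx
          · exact dp_v huv hle2
          · exact dp_S huv hle2 hx
        show (4:ℕ) ≤ _ + 1; omega
    · rcases h4_adj_inr_inl.mp h with ⟨hi, hx⟩ | ⟨hi, hx⟩ | ⟨hi, hx⟩ <;> subst hi
      · have h2 : dp G u (inl y) = 1 := by rw [hx, dp_u]
        show _ ≤ (0:ℕ) + 1; omega
      · have h2 : dp G u (inl y) = 1 := by rw [hx, dp_u]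
        show _ ≤ (2:ℕ) + 1; omega
      · have := dpV_le3 (G := G) (u := u) y
        show _ ≤ (4:ℕ) + 1; omega
    · rcases h4_adj_inr_inr.mp h with ⟨hi, hj⟩ | ⟨hi, hj⟩ | ⟨hj, hi⟩ | ⟨hj, hi⟩ <;>
        (subst hi; subst hj; simp [dp])
  · rintro (x | i) hw
    · by_cases hx : x = u
      · exact ⟨inr 0, by rw [hx]; exact adj_p_u.symm, by rw [hx, dp_u]; simp [dp]⟩
      · by_cases hadj : G.Adj u x
        · exact ⟨inl u, h4_adj_inl_inl.mpr hadj.symm, by rw [dp_u, dp_adj hadj]; omega⟩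
        · obtain ⟨m, hm1, hm2⟩ := Gmid hle2 (fun h => hx h.symm) hadj
          exact ⟨inl m, h4_adj_inl_inl.mpr hm2.symm,
            by rw [dp_adj hm1, dp_far hx hadj]; omega⟩
    · fin_cases i
      · exact absurd rfl hw
      · exact ⟨inl u, adj_a_u, by rw [dp_u]; show 1 < 2; omega⟩
      · exact ⟨inr 1, adj_a_b.symm, by show (2:ℕ) < 3; omega⟩
      · exact ⟨inr 2, adj_b_c.symm, by show (3:ℕ) < 4; omega⟩
end upper3
end AscPaper

namespace AscPaper
open SimpleGraph Sum
section upper4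
variable {V : Type*} [Fintype V] {G : SimpleGraph V} {u v : V}

lemma daV_ge2 {x : V} (hx : x ≠ u) : 2 ≤ da G u (inl x) := by
  simp only [da, if_neg hx]; split_ifs <;> omega

lemma dc_ge2 {x : V} (h : ¬(x = v ∨ x ∈ Sset G u v)) : 2 ≤ dc G u v (inl x) := by
  simp only [dc, if_neg h]; split_ifs <;> omega

variable (huv : G.edist u v = 2) (hle2 : ∀ x y : V, G.edist x y ≤ 2)
include huv hle2

lemma u_notin_S : u ∉ Sset G u v := fun h => (S_spec h).1 rfl

lemma dc_u : dc G u v (inl u) = 3 := by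
  refine dc_far ?_ ?_
  · rintro (h | h)
    · exact hne_uv huv h
    · exact u_notin_S huv hle2 h
  · rintro (h | ⟨s, hs, hsu⟩)
    · exact hnadj_uv huv (h.symm)
    · exact (S_spec hs).2.1 hsu.symm

lemma edist_a : ∀ w, (H4 G u v).edist (inr 1) w = da G u w := by
  apply edist_eq_of_cert
  · rfl
  · rintro (x | i) (y | j) h
    · have hG := h4_adj_inl_inl.mp h
      by_cases hx : x = u
      · have h1 : da G u (inl y) = 2 := da_adj (hx ▸ hG)
        have h2 : da G u (inl x) = 1 := by rw [hx, da_u]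
        omega
      · have := daV_le3 (G := G) (u := u) y
        have := daV_ge2 (G := G) hx
        omega
    · rcases h4_adj_inl_inr.mp h with ⟨hi, hx⟩ | ⟨hi, hx⟩ | ⟨hi, hx⟩ <;> subst hi
      · have h2 : da G u (inl x) = 1 := by rw [hx, da_u]
        show (2:ℕ) ≤ _ + 1; omega
      · show (0:ℕ) ≤ _ + 1; omega
      · have := daV_ge1 (G := G) (u := u) x
        show (2:ℕ) ≤ _ + 1; omega
    · rcases h4_adj_inr_inl.mp h with ⟨hi, hx⟩ | ⟨hi, hx⟩ | ⟨hi, hx⟩ <;> subst hi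
      · have h2 : da G u (inl y) = 1 := by rw [hx, da_u]
        show _ ≤ (2:ℕ) + 1; omega
      · have h2 : da G u (inl y) = 1 := by rw [hx, da_u]
        show _ ≤ (0:ℕ) + 1; omega
      · have := daV_le3 (G := G) (u := u) y
        show _ ≤ (2:ℕ) + 1; omega
    · rcases h4_adj_inr_inr.mp h with ⟨hi, hj⟩ | ⟨hi, hj⟩ | ⟨hj, hi⟩ | ⟨hj, hi⟩ <;>
        (subst hi; subst hj; simp [da])
  · rintro (x | i) hw
    · by_cases hx : x = u
      · exact ⟨inr 1, by rw [hx]; exact adj_a_u.symm, by rw [hx, da_u]; show 0 < 1; omega⟩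
      · by_cases hadj : G.Adj u x
        · exact ⟨inl u, h4_adj_inl_inl.mpr hadj.symm, by rw [da_u, da_adj hadj]; omega⟩
        · obtain ⟨m, hm1, hm2⟩ := Gmid hle2 (fun h => hx h.symm) hadj
          exact ⟨inl m, h4_adj_inl_inl.mpr hm2.symm,
            by rw [da_adj hm1, da_far hx hadj]; omega⟩
    · fin_cases i
      · exact ⟨inl u, adj_p_u, by rw [da_u]; show 1 < 2; omega⟩
      · exact absurd rfl hw
      · exact ⟨inr 1, adj_a_b.symm, by show (0:ℕ) < 1; omega⟩
      · exact ⟨inr 2, adj_b_c.symm, by show (1:ℕ) < 2; omega⟩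

lemma edist_b : ∀ w, (H4 G u v).edist (inr 2) w = db G u v w := by
  apply edist_eq_of_cert
  · rfl
  · rintro (x | i) (y | j) h
    · have := dbV_le3 (G := G) (u := u) (v := v) y
      have := dbV_ge2 (G := G) (u := u) (v := v) x
      omega
    · rcases h4_adj_inl_inr.mp h with ⟨hi, hx⟩ | ⟨hi, hx⟩ | ⟨hi, hx⟩ <;> subst hi
      · have h2 : db G u v (inl x) = 2 := db_near (Or.inl hx)
        show (3:ℕ) ≤ _ + 1; omega
      · show (1:ℕ) ≤ _ + 1
        have := dbV_ge2 (G := G) (u := u) (v := v) x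
        omega
      · show (1:ℕ) ≤ _ + 1
        have := dbV_ge2 (G := G) (u := u) (v := v) x
        omega
    · rcases h4_adj_inr_inl.mp h with ⟨hi, hx⟩ | ⟨hi, hx⟩ | ⟨hi, hx⟩ <;> subst hi
      · have := dbV_le3 (G := G) (u := u) (v := v) y
        show _ ≤ (3:ℕ) + 1; omega
      · have h2 : db G u v (inl y) = 2 := db_near (Or.inl hx)
        show _ ≤ (1:ℕ) + 1; omega
      · have h2 : db G u v (inl y) = 2 := db_near (Or.inr hx)
        show _ ≤ (1:ℕ) + 1; omega
    · rcases h4_adj_inr_inr.mp h with ⟨hi, hj⟩ | ⟨hi, hj⟩ | ⟨hj, hi⟩ | ⟨hj, hi⟩ <;>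
        (subst hi; subst hj; simp [db])
  · rintro (x | i) hw
    · by_cases hnear : x = u ∨ x = v ∨ x ∈ Sset G u v
      · rcases hnear with hx | hx | hx
        · exact ⟨inr 1, by rw [hx]; exact adj_a_u.symm, by rw [hx, db_near (Or.inl rfl)]; show 1 < 2; omega⟩
        · exact ⟨inr 3, by rw [hx]; exact adj_c_v.symm, by rw [hx, db_near (Or.inr (Or.inl rfl))]; show 1 < 2; omega⟩
        · exact ⟨inr 3, (adj_c_S hx).symm, by rw [db_near (Or.inr (Or.inr hx))]; show 1 < 2; omega⟩
      · push_neg at hnear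
        obtain ⟨hxu, hxv, hxS⟩ := hnear
        by_cases hadju : G.Adj u x
        · refine ⟨inl u, h4_adj_inl_inl.mpr hadju.symm, ?_⟩
          rw [db_near (Or.inl rfl), db_far (by tauto)]
          omega
        · by_cases hadjv : G.Adj v x
          · refine ⟨inl v, h4_adj_inl_inl.mpr hadjv.symm, ?_⟩
            rw [db_near (Or.inr (Or.inl rfl)), db_far (by tauto)]
            omega
          · exact absurd (mk_S hle2 hxu hadju hxv hadjv) hxS
    · fin_cases i
      · exact ⟨inl u, adj_p_u, by rw [db_near (Or.inl rfl)]; show 2 < 3; omega⟩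
      · exact ⟨inr 2, adj_a_b, by show (0:ℕ) < 1; omega⟩
      · exact absurd rfl hw
      · exact ⟨inr 2, adj_b_c.symm, by show (0:ℕ) < 1; omega⟩

lemma edist_c : ∀ w, (H4 G u v).edist (inr 3) w = dc G u v w := by
  apply edist_eq_of_cert
  · rfl
  · rintro (x | i) (y | j) h
    · have hG := h4_adj_inl_inl.mp h
      by_cases hx : x = v ∨ x ∈ Sset G u v
      · have h1 : dc G u v (inl x) = 1 := dc_one hx
        have h2 : dc G u v (inl y) ≤ 2 := by
          refine dc_le2 ?_
          rcases hx with rfl | hx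
          · exact Or.inl hG
          · exact Or.inr ⟨x, hx, hG⟩
        omega
      · have := dc_ge2 (G := G) hx
        have := dcV_le3 (G := G) (u := u) (v := v) y
        omega
    · rcases h4_adj_inl_inr.mp h with ⟨hi, hx⟩ | ⟨hi, hx⟩ | ⟨hi, hx⟩ <;> subst hi
      · have h2 : dc G u v (inl x) = 3 := by rw [hx]; exact dc_u huv hle2
        show (4:ℕ) ≤ _ + 1; omega
      · have := dc_ge1 (G := G) (u := u) (v := v) x
        show (2:ℕ) ≤ _ + 1; omega
      · show (0:ℕ) ≤ _ + 1; omega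
    · rcases h4_adj_inr_inl.mp h with ⟨hi, hx⟩ | ⟨hi, hx⟩ | ⟨hi, hx⟩ <;> subst hi
      · have := dcV_le3 (G := G) (u := u) (v := v) y
        show _ ≤ (4:ℕ) + 1; omega
      · have h2 : dc G u v (inl y) = 3 := by rw [hx]; exact dc_u huv hle2
        show _ ≤ (2:ℕ) + 1; omega
      · have h2 : dc G u v (inl y) = 1 := dc_one hx
        show _ ≤ (0:ℕ) + 1; omega
    · rcases h4_adj_inr_inr.mp h with ⟨hi, hj⟩ | ⟨hi, hj⟩ | ⟨hj, hi⟩ | ⟨hj, hi⟩ <;>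
        (subst hi; subst hj; simp [dc])
  · rintro (x | i) hw
    · by_cases hone : x = v ∨ x ∈ Sset G u v
      · refine ⟨inr 3, ?_, by rw [dc_one hone]; show 0 < 1; omega⟩
        rcases hone with rfl | hx
        · exact adj_c_v.symm
        · exact (adj_c_S hx).symm
      · by_cases htwo : G.Adj v x ∨ ∃ s ∈ Sset G u v, G.Adj s x
        · have hval : dc G u v (inl x) = 2 := by
            simp only [dc, if_neg hone, if_pos htwo]
          rcases htwo with hadj | ⟨s, hs, hsx⟩
          · exact ⟨inl v, h4_adj_inl_inl.mpr hadj.symm,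
              by rw [hval, dc_one (Or.inl rfl)]; omega⟩
          · exact ⟨inl s, h4_adj_inl_inl.mpr hsx.symm,
              by rw [hval, dc_one (Or.inr hs)]; omega⟩
        · push_neg at hone
          obtain ⟨hxv, hxS⟩ := hone
          have hnadj : ¬ G.Adj v x := fun hc => htwo (Or.inl hc)
          obtain ⟨m, hm1, hm2⟩ := Gmid hle2 (fun h => hxv h.symm) hnadj
          refine ⟨inl m, h4_adj_inl_inl.mpr hm2.symm, ?_⟩
          have h1 : dc G u v (inl m) ≤ 2 := dc_le2 (Or.inl hm1)
          have h2 : dc G u v (inl x) = 3 := dc_far (by tauto) htwo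
          omega
    · fin_cases i
      · exact ⟨inl u, adj_p_u, by rw [dc_u huv hle2]; show 3 < 4; omega⟩
      · exact ⟨inr 2, adj_a_b, by show (1:ℕ) < 2; omega⟩
      · exact ⟨inr 3, adj_b_c, by show (0:ℕ) < 1; omega⟩
      · exact absurd rfl hw
end upper4
end AscPaper

namespace AscPaper
open SimpleGraph Sum
section upper5
variable {V : Type*} [Fintype V] {G : SimpleGraph V} {u v : V}

lemma edist_le_two_of_mid {W : Type*} {H : SimpleGraph W} {x m y : W}
    (h1 : H.Adj x m) (h2 : H.Adj m y) : H.edist x y ≤ 2 :=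
  calc H.edist x y ≤ H.edist x m + H.edist m y := H.edist_triangle
    _ ≤ 1 + 1 := add_le_add (le_of_eq (edist_eq_one_iff_adj.mpr h1))
        (le_of_eq (edist_eq_one_iff_adj.mpr h2))
    _ = 2 := by norm_num

variable (huv : G.edist u v = 2) (hle2 : ∀ x y : V, G.edist x y ≤ 2)
include huv hle2

lemma h4_edist_inl_le2 (x y : V) : (H4 G u v).edist (inl x) (inl y) ≤ 2 := by
  rcases exists_mid_of_edist_le_two (hle2 x y) with rfl | h | ⟨m, h1, h2⟩
  · simp
  · rw [edist_eq_one_iff_adj.mpr (h4_adj_inl_inl.mpr h)]; norm_num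
  · exact edist_le_two_of_mid (h4_adj_inl_inl.mpr h1) (h4_adj_inl_inl.mpr h2)

lemma ecc_h4_p : ecc (H4 G u v) (inr 0) = 4 := by
  refine le_antisymm (iSup_le ?_) ?_
  · intro w
    rw [edist_p huv hle2 w]
    rcases w with x | i
    · exact_mod_cast (dpV_le3 x).trans (by norm_num)
    · fin_cases i <;> simp [dp] <;> norm_num
  · have h := edist_p huv hle2 (inr 3)
    calc (4 : ℕ∞) = (H4 G u v).edist (inr 0) (inr 3) := by rw [h]; rfl
      _ ≤ _ := le_iSup _ _

lemma ecc_h4_a : ecc (H4 G u v) (inr 1) = 3 := by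
  refine le_antisymm (iSup_le ?_) ?_
  · intro w
    rw [edist_a huv hle2 w]
    rcases w with x | i
    · exact_mod_cast daV_le3 x
    · fin_cases i <;> simp [da] <;> norm_num
  · have h := edist_a huv hle2 (inl v)
    rw [da_far (hne_uv huv).symm (hnadj_uv huv)] at h
    calc (3 : ℕ∞) = (H4 G u v).edist (inr 1) (inl v) := by rw [h]; rfl
      _ ≤ _ := le_iSup _ _

lemma ecc_h4_b : ecc (H4 G u v) (inr 2) = 3 := by
  refine le_antisymm (iSup_le ?_) ?_
  · intro w
    rw [edist_b huv hle2 w]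
    rcases w with x | i
    · exact_mod_cast dbV_le3 x
    · fin_cases i <;> simp [db] <;> norm_num
  · have h := edist_b huv hle2 (inr 0)
    calc (3 : ℕ∞) = (H4 G u v).edist (inr 2) (inr 0) := by rw [h]; rfl
      _ ≤ _ := le_iSup _ _

lemma ecc_h4_c : ecc (H4 G u v) (inr 3) = 4 := by
  refine le_antisymm (iSup_le ?_) ?_
  · intro w
    rw [edist_c huv hle2 w]
    rcases w with x | i
    · exact_mod_cast (dcV_le3 x).trans (by norm_num)
    · fin_cases i <;> simp [dc] <;> norm_num
  · have h := edist_c huv hle2 (inr 0)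
    calc (4 : ℕ∞) = (H4 G u v).edist (inr 3) (inr 0) := by rw [h]; rfl
      _ ≤ _ := le_iSup _ _

lemma ecc_h4_inl (x : V) : ecc (H4 G u v) (inl x) = 3 := by
  refine le_antisymm (iSup_le ?_) ?_
  · intro w
    rcases w with y | i
    · exact (h4_edist_inl_le2 huv hle2 x y).trans (by norm_num)
    · rw [SimpleGraph.edist_comm]
      fin_cases i
      · show (H4 G u v).edist (inr 0) (inl x) ≤ 3
        rw [edist_p huv hle2 (inl x)]
        exact_mod_cast (dpV_le3 x).trans (by norm_num)
      · show (H4 G u v).edist (inr 1) (inl x) ≤ 3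
        rw [edist_a huv hle2 (inl x)]
        exact_mod_cast daV_le3 x
      · show (H4 G u v).edist (inr 2) (inl x) ≤ 3
        rw [edist_b huv hle2 (inl x)]
        exact_mod_cast dbV_le3 x
      · show (H4 G u v).edist (inr 3) (inl x) ≤ 3
        rw [edist_c huv hle2 (inl x)]
        exact_mod_cast dcV_le3 x
  · by_cases hxu : x = u
    · have h := edist_c huv hle2 (inl x)
      rw [hxu, dc_u huv hle2] at h
      calc (3 : ℕ∞) = (H4 G u v).edist (inl x) (inr 3) := by
            rw [SimpleGraph.edist_comm, hxu, h]; norm_num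
        _ ≤ _ := le_iSup _ _
    · by_cases hnear : x = v ∨ x ∈ Sset G u v
      · have h := edist_p huv hle2 (inl x)
        have h3 : dp G u (inl x) = 3 := by
          rcases hnear with rfl | hx
          · exact dp_v huv hle2
          · exact dp_S huv hle2 hx
        rw [h3] at h
        calc (3 : ℕ∞) = (H4 G u v).edist (inl x) (inr 0) := by
              rw [SimpleGraph.edist_comm, h]; norm_num
          _ ≤ _ := le_iSup _ _
      · push_neg at hnear
        have h := edist_b huv hle2 (inl x)
        rw [db_far (by tauto)] at h
        calc (3 : ℕ∞) = (H4 G u v).edist (inl x) (inr 2) := by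
              rw [SimpleGraph.edist_comm, h]; norm_num
          _ ≤ _ := le_iSup _ _

lemma h4_connected : (H4 G u v).Connected := by
  rw [connected_iff]
  refine ⟨?_, ⟨inr 0⟩⟩
  intro w w'
  apply reachable_of_edist_ne_top
  have : (H4 G u v).edist w w' ≤ (dp G u w : ℕ∞) + (dp G u w' : ℕ∞) := by
    calc (H4 G u v).edist w w' ≤ (H4 G u v).edist w (inr 0) + (H4 G u v).edist (inr 0) w' :=
        SimpleGraph.edist_triangle
      _ = (dp G u w : ℕ∞) + (dp G u w' : ℕ∞) := by
          rw [SimpleGraph.edist_comm, edist_p huv hle2 w, edist_p huv hle2 w']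
  intro htop
  rw [htop] at this
  have h2 : ((dp G u w + dp G u w' : ℕ) : ℕ∞) = ⊤ := top_le_iff.mp (by push_cast; exact this)
  exact (ENat.coe_ne_top _) h2

lemma h4_radius : graphRadius (H4 G u v) = 3 := by
  refine le_antisymm ?_ (le_iInf ?_)
  · calc graphRadius (H4 G u v) ≤ ecc (H4 G u v) (inr 1) := iInf_le _ _
      _ = 3 := ecc_h4_a huv hle2
  · intro w
    rcases w with x | i
    · rw [ecc_h4_inl huv hle2 x]
    · fin_cases i
      · show (3:ℕ∞) ≤ ecc (H4 G u v) (inr 0)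
        rw [ecc_h4_p huv hle2]; norm_num
      · show (3:ℕ∞) ≤ ecc (H4 G u v) (inr 1)
        rw [ecc_h4_a huv hle2]
      · show (3:ℕ∞) ≤ ecc (H4 G u v) (inr 2)
        rw [ecc_h4_b huv hle2]
      · show (3:ℕ∞) ≤ ecc (H4 G u v) (inr 3)
        rw [ecc_h4_c huv hle2]; norm_num

lemma h4_isasc : IsASC 3 (H4 G u v) := by
  refine ⟨h4_connected huv hle2, h4_radius huv hle2, ?_⟩
  have hset : {w : V ⊕ Fin 4 | ecc (H4 G u v) w ≠ graphRadius (H4 G u v)} =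
      {inr 0, inr 3} := by
    rw [h4_radius huv hle2]
    ext w
    rcases w with x | i
    · simp [ecc_h4_inl huv hle2 x]
    · fin_cases i
      · show ecc (H4 G u v) (inr 0) ≠ 3 ↔ _
        simp [ecc_h4_p huv hle2]
      · show ecc (H4 G u v) (inr 1) ≠ 3 ↔ _
        simp [ecc_h4_a huv hle2]
      · show ecc (H4 G u v) (inr 2) ≠ 3 ↔ _
        simp [ecc_h4_b huv hle2]
      · show ecc (H4 G u v) (inr 3) ≠ 3 ↔ _
        simp [ecc_h4_c huv hle2]
  rw [hset]
  exact Set.ncard_pair (by simp)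
end upper5
end AscPaper

namespace AscPaper
open SimpleGraph Sum
section assemble
variable {V : Type*} [Fintype V] {G : SimpleGraph V}

lemma hle2_of_diam (hdiam : graphDiam G = 2) : ∀ x y : V, G.edist x y ≤ 2 := by
  intro x y
  calc G.edist x y ≤ ecc G x := le_iSup _ y
    _ ≤ graphDiam G := le_iSup _ x
    _ = 2 := hdiam

lemma exists_pair (hdiam : graphDiam G = 2) : ∃ u v : V, G.edist u v = 2 := by
  by_contra h
  push_neg at h
  have hle : graphDiam G ≤ 1 := by
    refine iSup_le fun x => iSup_le fun y => ?_
    have h2 := hle2_of_diam hdiam x y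
    have hlt : G.edist x y < 2 := lt_of_le_of_ne h2 (h x y)
    have h12 : (2:ℕ∞) = 1 + 1 := by norm_num
    rw [h12] at hlt
    exact (ENat.lt_add_one_iff (by norm_num)).mp hlt
  rw [hdiam] at hle
  norm_num at hle

lemma four_mem (hdiam : graphDiam G = 2) :
    4 ∈ {k : ℕ | ∃ H : SimpleGraph (V ⊕ Fin k), IsASC 3 H ∧
      ∀ x y : V, H.Adj (Sum.inl x) (Sum.inl y) ↔ G.Adj x y} := by
  obtain ⟨u, v, huv⟩ := exists_pair hdiam
  exact ⟨H4 G u v, h4_isasc huv (hle2_of_diam hdiam), fun x y => h4_adj_inl_inl⟩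
end assemble
end AscPaper

namespace AscPaper
open SimpleGraph Sum
section lower
variable {V : Type*} [Fintype V] {G : SimpleGraph V}

lemma reach_closed {W : Type*} {H : SimpleGraph W} {C : Set W}
    (hC : ∀ z w, z ∈ C → H.Adj z w → w ∈ C) {z w : W}
    (hr : H.Reachable z w) (hz : z ∈ C) : w ∈ C := by
  obtain ⟨p⟩ := hr
  induction p with
  | nil => exact hz
  | cons h q ih => exact ih (hC _ _ hz h)

lemma lb_nonempty (hdiam : graphDiam G = 2) : Nonempty V := by
  by_contra hV
  rw [not_nonempty_iff] at hV
  rw [graphDiam, iSup_of_empty] at hdiam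
  exact absurd hdiam.symm (by norm_num)

variable {k : ℕ} {H : SimpleGraph (V ⊕ Fin k)}
variable (hdiam : graphDiam G = 2) (hasc : IsASC 3 H)
    (hind : ∀ x y : V, H.Adj (Sum.inl x) (Sum.inl y) ↔ G.Adj x y)

include hdiam hind in
lemma lb_inl_le2 (x y : V) : H.edist (inl x) (inl y) ≤ 2 := by
  rcases exists_mid_of_edist_le_two (hle2_of_diam hdiam x y) with rfl | h | ⟨m, h1, h2⟩
  · simp
  · rw [edist_eq_one_iff_adj.mpr ((hind x y).mpr h)]; norm_num
  · exact edist_le_two_of_mid ((hind x m).mpr h1) ((hind m y).mpr h2)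

include hasc in
lemma lb_ecc_ge3 (w : V ⊕ Fin k) : 3 ≤ ecc H w := by
  calc (3:ℕ∞) = graphRadius H := hasc.2.1.symm
    _ ≤ ecc H w := iInf_le _ w

include hdiam hasc hind in
lemma lb_far (x : V) : ∃ t : Fin k, 3 ≤ H.edist (inl x) (inr t) := by
  by_contra h
  push_neg at h
  have : ecc H (inl x) ≤ 2 := by
    refine iSup_le ?_
    rintro (y | t)
    · exact lb_inl_le2 hdiam hind x y
    · have hlt := h t
      have h3 : (3:ℕ∞) = 2 + 1 := by norm_num
      rw [h3] at hlt
      exact (ENat.lt_add_one_iff (by norm_num)).mp hlt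
  have := (lb_ecc_ge3 hasc (inl x)).trans this
  norm_num at this

include hasc in
lemma lb_neighbor (x₀ : V) (t : Fin k) : ∃ w, H.Adj (inr t) w := by
  have hr : H.Reachable (inr t) (inl x₀) := hasc.1 (inr t) (inl x₀)
  obtain ⟨p⟩ := hr
  cases p with
  | cons h q => exact ⟨_, h⟩

include hasc in
lemma lb_ecc4_of_ne3 {w : V ⊕ Fin k} (h : ecc H w ≠ graphRadius H) : 4 ≤ ecc H w := by
  have h3 : ecc H w ≠ 3 := fun hc => h (hc.trans hasc.2.1.symm)
  have hge := lb_ecc_ge3 hasc w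
  have : (3:ℕ∞) < ecc H w := lt_of_le_of_ne hge (Ne.symm h3)
  have h4 : (4:ℕ∞) = 3 + 1 := by norm_num
  rw [h4]
  exact (ENat.add_one_le_iff (by norm_num)).mpr this

lemma lb_far_vertex {w : V ⊕ Fin k} (h : 4 ≤ ecc H w) :
    ∃ w', 4 ≤ H.edist w w' := by
  by_contra hc
  push_neg at hc
  have : ecc H w ≤ 3 := by
    refine iSup_le fun w' => ?_
    have hlt := hc w'
    have h4 : (4:ℕ∞) = 3 + 1 := by norm_num
    rw [h4] at hlt
    exact (ENat.lt_add_one_iff (by norm_num)).mp hlt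
  have := h.trans this
  norm_num at this

-- the two noncentral vertices
include hasc in
lemma lb_noncentral_pair : ∃ w1 w2 : V ⊕ Fin k, w1 ≠ w2 ∧ 4 ≤ H.edist w1 w2 ∧
    (∀ w, w ≠ w1 → w ≠ w2 → ecc H w = 3) := by
  obtain ⟨w1, w2, hne, hset⟩ := Set.ncard_eq_two.mp hasc.2.2
  have h1 : ecc H w1 ≠ graphRadius H := by
    have : w1 ∈ {u | ecc H u ≠ graphRadius H} := by rw [hset]; exact Or.inl rfl
    exact this
  have h41 : 4 ≤ ecc H w1 := lb_ecc4_of_ne3 hasc h1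
  obtain ⟨w', hw'⟩ := lb_far_vertex h41
  have hw'mem : w' ∈ {u | ecc H u ≠ graphRadius H} := by
    intro hc
    have : ecc H w' = 3 := hc.trans hasc.2.1
    have hle : H.edist w' w1 ≤ 3 := this ▸ le_iSup _ w1
    rw [SimpleGraph.edist_comm] at hle
    have := hw'.trans hle
    norm_num at this
  rw [hset] at hw'mem
  have hw'ne : w' ≠ w1 := by
    intro hc
    rw [hc, edist_self] at hw'
    exact absurd hw' (by norm_num)
  have hw2 : w' = w2 := by
    rcases hw'mem with h | h
    · exact absurd h hw'ne
    · exact h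
  refine ⟨w1, w2, hne, hw2 ▸ hw', ?_⟩
  intro w hne1 hne2
  have : w ∉ {u | ecc H u ≠ graphRadius H} := by
    rw [hset]
    rintro (h | h)
    · exact hne1 h
    · exact hne2 h
  have heq : ecc H w = graphRadius H := not_not.mp this
  exact heq.trans hasc.2.1

include hdiam hasc hind in
lemma k0_impossible (hk : k = 0) : False := by
  subst hk
  obtain ⟨x₀⟩ := lb_nonempty hdiam
  obtain ⟨t, _⟩ := lb_far hdiam hasc hind x₀
  exact t.elim0

include hdiam hasc hind in
lemma k1_impossible (hk : k = 1) : False := by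
  subst hk
  obtain ⟨x₀⟩ := lb_nonempty hdiam
  obtain ⟨w, hw⟩ := lb_neighbor hasc x₀ 0
  rcases w with y | t
  · obtain ⟨t, ht⟩ := lb_far hdiam hasc hind y
    have ht0 : t = 0 := Subsingleton.elim _ _
    rw [ht0, SimpleGraph.edist_comm, edist_eq_one_iff_adj.mpr hw] at ht
    norm_num at ht
  · have : t = 0 := Subsingleton.elim _ _
    rw [this] at hw
    exact H.irrefl hw

include hdiam hasc hind in
lemma k2_impossible (hk : k = 2) : False := by
  subst hk
  obtain ⟨x₀⟩ := lb_nonempty hdiam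
  -- whether each of inr 0, inr 1 has an inl neighbor
  by_cases hA0 : ∃ x : V, H.Adj (inr 0) (inl x)
  · by_cases hA1 : ∃ y : V, H.Adj (inr 1) (inl y)
    · obtain ⟨x0, hx0⟩ := hA0
      obtain ⟨y0, hy0⟩ := hA1
      have hfar0 : 3 ≤ H.edist (inl x0) (inr 1) := by
        obtain ⟨t, ht⟩ := lb_far hdiam hasc hind x0
        have : t = 0 ∨ t = 1 := by omega
        rcases this with rfl | rfl
        · rw [SimpleGraph.edist_comm, edist_eq_one_iff_adj.mpr hx0] at ht
          norm_num at ht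
        · exact ht
      have hfar1 : 3 ≤ H.edist (inl y0) (inr 0) := by
        obtain ⟨t, ht⟩ := lb_far hdiam hasc hind y0
        have : t = 0 ∨ t = 1 := by omega
        rcases this with rfl | rfl
        · exact ht
        · rw [SimpleGraph.edist_comm, edist_eq_one_iff_adj.mpr hy0] at ht
          norm_num at ht
      have hxyne : x0 ≠ y0 := by
        rintro rfl
        rw [SimpleGraph.edist_comm, edist_eq_one_iff_adj.mpr hy0] at hfar0
        norm_num at hfar0
      have hxyadj : ¬ G.Adj x0 y0 := by
        intro hadj
        have : H.edist (inl x0) (inr 1) ≤ 2 :=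
          edist_le_two_of_mid ((hind x0 y0).mpr hadj) hy0.symm
        have := hfar0.trans this
        norm_num at this
      obtain ⟨m, hm1, hm2⟩ := Gmid (hle2_of_diam hdiam) hxyne hxyadj
      obtain ⟨t, ht⟩ := lb_far hdiam hasc hind m
      have hm0 : H.edist (inl m) (inr 0) ≤ 2 :=
        edist_le_two_of_mid ((hind m x0).mpr hm1.symm) hx0.symm
      have hm1' : H.edist (inl m) (inr 1) ≤ 2 :=
        edist_le_two_of_mid ((hind m y0).mpr hm2) hy0.symm
      have : t = 0 ∨ t = 1 := by omega
      rcases this with rfl | rfl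
      · have := ht.trans hm0; norm_num at this
      · have := ht.trans hm1'; norm_num at this
    · -- inr 1 has no inl neighbor; must be adjacent to inr 0
      obtain ⟨w, hw⟩ := lb_neighbor hasc x₀ 1
      rcases w with y | t
      · exact hA1 ⟨y, hw⟩
      · have ht : t = 0 := by
          have : t = 0 ∨ t = 1 := by omega
          rcases this with rfl | rfl
          · rfl
          · exact absurd hw (H.irrefl)
        subst ht
        obtain ⟨x0, hx0⟩ := hA0
        obtain ⟨t, hft⟩ := lb_far hdiam hasc hind x0
        have : t = 0 ∨ t = 1 := by omega
        rcases this with rfl | rfl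
        · rw [SimpleGraph.edist_comm, edist_eq_one_iff_adj.mpr hx0] at hft
          norm_num at hft
        · have : H.edist (inl x0) (inr 1) ≤ 2 :=
            edist_le_two_of_mid hx0.symm hw.symm
          have := hft.trans this
          norm_num at this
  · -- inr 0 has no inl neighbor
    obtain ⟨w, hw⟩ := lb_neighbor hasc x₀ 0
    rcases w with y | t
    · exact hA0 ⟨y, hw⟩
    · have ht : t = 1 := by
        have : t = 0 ∨ t = 1 := by omega
        rcases this with rfl | rfl
        · exact absurd hw (H.irrefl)
        · rfl
      subst ht
      by_cases hA1 : ∃ y : V, H.Adj (inr 1) (inl y)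
      · obtain ⟨y0, hy0⟩ := hA1
        obtain ⟨t, hft⟩ := lb_far hdiam hasc hind y0
        have : t = 0 ∨ t = 1 := by omega
        rcases this with rfl | rfl
        · have : H.edist (inl y0) (inr 0) ≤ 2 :=
            edist_le_two_of_mid hy0.symm hw.symm
          have := hft.trans this
          norm_num at this
        · rw [SimpleGraph.edist_comm, edist_eq_one_iff_adj.mpr hy0] at hft
          norm_num at hft
      · -- disconnected
        have hclosed : ∀ z w : V ⊕ Fin 2, z ∈ (Set.range inr : Set (V ⊕ Fin 2)) →
            H.Adj z w → w ∈ Set.range inr := by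
          rintro z w ⟨t, rfl⟩ hadj
          rcases w with y | s
          · exfalso
            have : t = 0 ∨ t = 1 := by omega
            rcases this with rfl | rfl
            · exact hA0 ⟨y, hadj⟩
            · exact hA1 ⟨y, hadj⟩
          · exact ⟨s, rfl⟩
        have := reach_closed hclosed (hasc.1 (inr 0) (inl x₀)) ⟨0, rfl⟩
        obtain ⟨t, ht⟩ := this
        exact absurd ht (by simp)
end lower
end AscPaper

namespace AscPaper
open SimpleGraph Sum
section k3
variable {V : Type*} [Fintype V] {G : SimpleGraph V} {H : SimpleGraph (V ⊕ Fin 3)}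
variable (hdiam : graphDiam G = 2) (hasc : IsASC 3 H)
    (hind : ∀ x y : V, H.Adj (Sum.inl x) (Sum.inl y) ↔ G.Adj x y)

lemma succ_le_edist_of_forall {W : Type*} {H : SimpleGraph W} {u v : W} {k : ℕ∞} (hne : u ≠ v)
    (h : ∀ m, H.Adj u m → k ≤ H.edist m v) : k + 1 ≤ H.edist u v := by
  by_cases htop : H.edist u v = ⊤
  · rw [htop]; exact le_top
  obtain ⟨p, hp⟩ := exists_walk_of_edist_ne_top htop
  cases p with
  | nil => exact absurd rfl hne
  | cons hadj q =>
    have h1 : k ≤ H.edist _ v := h _ hadj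
    have h2 : H.edist _ v ≤ q.length := edist_le q
    rw [← hp]
    simp only [SimpleGraph.Walk.length_cons]
    push_cast
    calc k + 1 ≤ (q.length : ℕ∞) + 1 := add_le_add_left (h1.trans h2) 1
      _ = _ := by ring

lemma fin3_third : ∀ s s' : Fin 3, s ≠ s' → ∃ t : Fin 3, t ≠ s ∧ t ≠ s' := by decide

lemma fin3_cases (a b c : Fin 3) (hab : a ≠ b) (hac : a ≠ c) (hbc : b ≠ c) :
    ∀ t : Fin 3, t = a ∨ t = b ∨ t = c := by
  intro t
  omega

lemma ge3_vertex {w : V ⊕ Fin 3} (h : 3 ≤ ecc H w) : ∃ w', 3 ≤ H.edist w w' := by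
  by_contra hc
  push_neg at hc
  have : ecc H w ≤ 2 := by
    refine iSup_le fun w' => ?_
    have hlt := hc w'
    have h3 : (3:ℕ∞) = 2 + 1 := by norm_num
    rw [h3] at hlt
    exact (ENat.lt_add_one_iff (by norm_num)).mp hlt
  have := h.trans this
  norm_num at this

lemma ecc_ge_edist (w w' : V ⊕ Fin 3) : H.edist w w' ≤ ecc H w := le_iSup _ w'

include hasc in
lemma three_noncentral {z1 z2 z3 : V ⊕ Fin 3} (h12 : z1 ≠ z2) (h13 : z1 ≠ z3) (h23 : z2 ≠ z3)
    (e1 : 4 ≤ ecc H z1) (e2 : 4 ≤ ecc H z2) (e3 : 4 ≤ ecc H z3) : False := by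
  obtain ⟨w1, w2, hne, h4, hcent⟩ := lb_noncentral_pair hasc
  have m : ∀ z : V ⊕ Fin 3, 4 ≤ ecc H z → z = w1 ∨ z = w2 := by
    intro z hz
    by_contra hc
    push_neg at hc
    rw [hcent z hc.1 hc.2] at hz
    norm_num at hz
  rcases m z1 e1 with rfl | rfl <;> rcases m z2 e2 with rfl | rfl <;>
    rcases m z3 e3 with rfl | rfl <;> simp_all

-- x attached to t1, far from everything except via far witness
include hdiam hasc hind in
lemma caseA_edge (t1 t2 t3 : Fin 3) (h12 : t1 ≠ t2) (h13 : t1 ≠ t3) (h23 : t2 ≠ t3)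
    (A1 : ∃ x, H.Adj (inr t1) (inl x)) (A2 : ∃ x, H.Adj (inr t2) (inl x))
    (A3 : ∃ x, H.Adj (inr t3) (inl x))
    (hadj : H.Adj (inr t1) (inr t2)) : False := by
  have cover := fin3_cases t1 t2 t3 h12 h13 h23
  -- (i) vertices attached to t1 are far from t3
  have far1 : ∀ x : V, H.Adj (inr t1) (inl x) → 3 ≤ H.edist (inl x) (inr t3) := by
    intro x hx
    obtain ⟨t, ht⟩ := lb_far hdiam hasc hind x
    rcases cover t with rfl | rfl | rfl
    · rw [SimpleGraph.edist_comm, edist_eq_one_iff_adj.mpr hx] at ht; norm_num at ht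
    · have := ht.trans (edist_le_two_of_mid hx.symm hadj)
      norm_num at this
    · exact ht
  have far2 : ∀ x : V, H.Adj (inr t2) (inl x) → 3 ≤ H.edist (inl x) (inr t3) := by
    intro x hx
    obtain ⟨t, ht⟩ := lb_far hdiam hasc hind x
    rcases cover t with rfl | rfl | rfl
    · have := ht.trans (edist_le_two_of_mid hx.symm hadj.symm)
      norm_num at this
    · rw [SimpleGraph.edist_comm, edist_eq_one_iff_adj.mpr hx] at ht; norm_num at ht
    · exact ht
  -- (ii) t3 not adjacent to t1, t2
  have n31 : ¬ H.Adj (inr t3) (inr t1) := by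
    intro h
    obtain ⟨x, hx⟩ := A1
    obtain ⟨t, ht⟩ := lb_far hdiam hasc hind x
    rcases cover t with rfl | rfl | rfl
    · rw [SimpleGraph.edist_comm, edist_eq_one_iff_adj.mpr hx] at ht; norm_num at ht
    · have := ht.trans (edist_le_two_of_mid hx.symm hadj); norm_num at this
    · have := ht.trans (edist_le_two_of_mid hx.symm h.symm); norm_num at this
  have n32 : ¬ H.Adj (inr t3) (inr t2) := by
    intro h
    obtain ⟨x, hx⟩ := A2
    obtain ⟨t, ht⟩ := lb_far hdiam hasc hind x
    rcases cover t with rfl | rfl | rfl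
    · have := ht.trans (edist_le_two_of_mid hx.symm hadj.symm); norm_num at this
    · rw [SimpleGraph.edist_comm, edist_eq_one_iff_adj.mpr hx] at ht; norm_num at ht
    · have := ht.trans (edist_le_two_of_mid hx.symm h.symm); norm_num at this
  -- (iii) vertices attached to t3 are far from t1 and t2
  have nadj31 : ∀ w : V, H.Adj (inr t3) (inl w) → ¬ H.Adj (inl w) (inr t1) := by
    intro w hw hc
    obtain ⟨t, ht⟩ := lb_far hdiam hasc hind w
    rcases cover t with rfl | rfl | rfl
    · rw [SimpleGraph.edist_comm, edist_eq_one_iff_adj.mpr hc.symm] at ht; norm_num at ht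
    · have := ht.trans (edist_le_two_of_mid hc hadj); norm_num at this
    · rw [SimpleGraph.edist_comm, edist_eq_one_iff_adj.mpr hw] at ht; norm_num at ht
  have nadj32 : ∀ w : V, H.Adj (inr t3) (inl w) → ¬ H.Adj (inl w) (inr t2) := by
    intro w hw hc
    obtain ⟨t, ht⟩ := lb_far hdiam hasc hind w
    rcases cover t with rfl | rfl | rfl
    · have := ht.trans (edist_le_two_of_mid hc hadj.symm); norm_num at this
    · rw [SimpleGraph.edist_comm, edist_eq_one_iff_adj.mpr hc.symm] at ht; norm_num at ht
    · rw [SimpleGraph.edist_comm, edist_eq_one_iff_adj.mpr hw] at ht; norm_num at ht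
  have far31 : ∀ w : V, H.Adj (inr t3) (inl w) → 3 ≤ H.edist (inl w) (inr t1) := by
    intro w hw
    by_contra hc
    push_neg at hc
    have hle : H.edist (inl w) (inr t1) ≤ 2 := by
      have h3 : (3:ℕ∞) = 2 + 1 := by norm_num
      rw [h3] at hc
      exact (ENat.lt_add_one_iff (by norm_num)).mp hc
    rcases exists_mid_of_edist_le_two hle with heq | hA | ⟨m, hm1, hm2⟩
    · exact absurd heq (by simp)
    · exact nadj31 w hw hA
    · rcases m with x | s
      · -- x attached to t1 and adjacent to w
        have hx1 : H.Adj (inr t1) (inl x) := hm2.symm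
        have := (far1 x hx1).trans (edist_le_two_of_mid hm1.symm hw.symm)
        norm_num at this
      · rcases cover s with rfl | rfl | rfl
        · exact H.irrefl hm2
        · exact nadj32 w hw hm1
        · exact n31 hm2
  have far32 : ∀ w : V, H.Adj (inr t3) (inl w) → 3 ≤ H.edist (inl w) (inr t2) := by
    intro w hw
    by_contra hc
    push_neg at hc
    have hle : H.edist (inl w) (inr t2) ≤ 2 := by
      have h3 : (3:ℕ∞) = 2 + 1 := by norm_num
      rw [h3] at hc
      exact (ENat.lt_add_one_iff (by norm_num)).mp hc
    rcases exists_mid_of_edist_le_two hle with heq | hA | ⟨m, hm1, hm2⟩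
    · exact absurd heq (by simp)
    · exact nadj32 w hw hA
    · rcases m with x | s
      · have hx2 : H.Adj (inr t2) (inl x) := hm2.symm
        have := (far2 x hx2).trans (edist_le_two_of_mid hm1.symm hw.symm)
        norm_num at this
      · rcases cover s with rfl | rfl | rfl
        · exact nadj31 w hw hm1
        · exact H.irrefl hm2
        · exact n32 hm2
  -- (iv) big distances
  have big1 : (4:ℕ∞) ≤ H.edist (inr t3) (inr t1) := by
    have h43 : (4:ℕ∞) = 3 + 1 := by norm_num
    rw [h43]
    refine succ_le_edist_of_forall (by simp [Ne.symm, h13.symm]) ?_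
    rintro (w | s) hm
    · exact far31 w hm
    · rcases cover s with rfl | rfl | rfl
      · exact absurd hm n31
      · exact absurd hm n32
      · exact absurd hm H.irrefl
  have big2 : (4:ℕ∞) ≤ H.edist (inr t3) (inr t2) := by
    have h43 : (4:ℕ∞) = 3 + 1 := by norm_num
    rw [h43]
    refine succ_le_edist_of_forall (by simp [Ne.symm, h23.symm]) ?_
    rintro (w | s) hm
    · exact far32 w hm
    · rcases cover s with rfl | rfl | rfl
      · exact absurd hm n31
      · exact absurd hm n32
      · exact absurd hm H.irrefl
  refine three_noncentral hasc (z1 := inr t1) (z2 := inr t2) (z3 := inr t3)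
    (by simp [h12]) (by simp [h13]) (by simp [h23]) ?_ ?_ ?_
  · exact le_trans (by rw [SimpleGraph.edist_comm] at big1; exact big1.trans (ecc_ge_edist _ _)) (le_refl _)
  · exact le_trans (by rw [SimpleGraph.edist_comm] at big2; exact big2.trans (ecc_ge_edist _ _)) (le_refl _)
  · exact big1.trans (ecc_ge_edist _ _)
end k3
end AscPaper

namespace AscPaper
open SimpleGraph Sum
section k3b
variable {V : Type*} [Fintype V] {G : SimpleGraph V} {H : SimpleGraph (V ⊕ Fin 3)}
variable (hdiam : graphDiam G = 2) (hasc : IsASC 3 H)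
    (hind : ∀ x y : V, H.Adj (Sum.inl x) (Sum.inl y) ↔ G.Adj x y)

lemma walk3_decomp {W : Type*} {H : SimpleGraph W} {a b : W} (p : H.Walk a b)
    (hp : p.length = 3) : ∃ m1 m2, H.Adj a m1 ∧ H.Adj m1 m2 ∧ H.Adj m2 b := by
  cases p with
  | nil => simp at hp
  | cons h q =>
    cases q with
    | nil => simp at hp
    | cons h2 r =>
      cases r with
      | nil => simp at hp
      | cons h3 rr =>
        cases rr with
        | nil => exact ⟨_, _, h, h2, h3⟩
        | cons h4 rrr => simp [SimpleGraph.Walk.length_cons] at hp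

include hdiam in
lemma ecc_G_two {z z' : V} (hne : z ≠ z') (hnadj : ¬ G.Adj z z') : ecc G z = 2 := by
  refine le_antisymm (iSup_le fun y => hle2_of_diam hdiam z y) ?_
  calc (2:ℕ∞) ≤ G.edist z z' := enat_two_le (by simp [hne]) (by simp [hnadj])
    _ ≤ ecc G z := le_iSup _ z'

include hdiam hasc hind in
lemma caseA_indep (hnot : ¬ NewAddedHyp G)
    (A : ∀ t : Fin 3, ∃ x, H.Adj (inr t) (inl x))
    (noT : ∀ s s' : Fin 3, ¬ H.Adj (inr s) (inr s')) : False := by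
  have hle2 := hle2_of_diam hdiam
  -- no vertex attached to two different added vertices
  have disj : ∀ s1 s2 : Fin 3, s1 ≠ s2 → ∀ x : V,
      ¬(H.Adj (inr s1) (inl x) ∧ H.Adj (inr s2) (inl x)) := by
    rintro s1 s2 hne x ⟨ha1, ha2⟩
    obtain ⟨s3, h31, h32⟩ := fin3_third s1 s2 hne
    have cover := fin3_cases s1 s2 s3 hne (Ne.symm h31) (Ne.symm h32)
    have hfar : 3 ≤ H.edist (inl x) (inr s3) := by
      obtain ⟨t, ht⟩ := lb_far hdiam hasc hind x
      rcases cover t with rfl | rfl | rfl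
      · rw [SimpleGraph.edist_comm, edist_eq_one_iff_adj.mpr ha1] at ht; norm_num at ht
      · rw [SimpleGraph.edist_comm, edist_eq_one_iff_adj.mpr ha2] at ht; norm_num at ht
      · exact ht
    obtain ⟨w, hw⟩ := A s3
    have hnadjxw : ¬ G.Adj x w := by
      intro hc
      have := hfar.trans (edist_le_two_of_mid ((hind x w).mpr hc) hw.symm)
      norm_num at this
    have hnexw : x ≠ w := by
      rintro rfl
      rw [SimpleGraph.edist_comm, edist_eq_one_iff_adj.mpr hw] at hfar
      norm_num at hfar
    obtain ⟨m, hm1, hm2⟩ := Gmid hle2 hnexw hnadjxw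
    obtain ⟨t, ht⟩ := lb_far hdiam hasc hind m
    have hm1' : H.Adj (inl m) (inl x) := (hind m x).mpr hm1.symm
    have hm2' : H.Adj (inl m) (inl w) := (hind m w).mpr hm2
    rcases cover t with rfl | rfl | rfl
    · have := ht.trans (edist_le_two_of_mid hm1' ha1.symm); norm_num at this
    · have := ht.trans (edist_le_two_of_mid hm1' ha2.symm); norm_num at this
    · have := ht.trans (edist_le_two_of_mid hm2' hw.symm); norm_num at this
  -- distances from V vertices are at most 3
  have inl_le3 : ∀ (x : V) (w : V ⊕ Fin 3), H.edist (inl x) w ≤ 3 := by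
    rintro x (y | t)
    · exact (lb_inl_le2 hdiam hind x y).trans (by norm_num)
    · obtain ⟨x', hx'⟩ := A t
      calc H.edist (inl x) (inr t) ≤ H.edist (inl x) (inl x') + H.edist (inl x') (inr t) :=
          SimpleGraph.edist_triangle
        _ ≤ 2 + 1 := add_le_add (lb_inl_le2 hdiam hind x x')
            (le_of_eq (edist_eq_one_iff_adj.mpr hx'.symm))
        _ = 3 := by norm_num
  -- the far pair consists of two added vertices
  obtain ⟨w1, w2, hnew, h4, hcent⟩ := lb_noncentral_pair hasc
  obtain ⟨s1, hw1⟩ : ∃ s, w1 = inr s := by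
    rcases w1 with x | s
    · exfalso
      have := h4.trans (inl_le3 x w2)
      norm_num at this
    · exact ⟨s, rfl⟩
  obtain ⟨s2, hw2⟩ : ∃ s, w2 = inr s := by
    rcases w2 with x | s
    · exfalso
      rw [SimpleGraph.edist_comm] at h4
      have := h4.trans (inl_le3 x w1)
      norm_num at this
    · exact ⟨s, rfl⟩
  subst hw1; subst hw2
  have hs12 : s1 ≠ s2 := fun hc => hnew (by rw [hc])
  obtain ⟨s3, h31, h32⟩ := fin3_third s1 s2 hs12
  -- distance from s3 to s1 and s2 is exactly 3
  have hecc3 : ecc H (inr s3) = 3 := hcent _ (by simp [h31]) (by simp [h32])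
  have dist3 : ∀ s : Fin 3, s ≠ s3 → H.edist (inr s3) (inr s) = 3 := by
    intro s hs
    refine le_antisymm (hecc3 ▸ ecc_ge_edist (H := H) (inr s3) (inr s)) ?_
    by_contra hc
    push_neg at hc
    have hle : H.edist (inr s3) (inr s) ≤ 2 := by
      have h3 : (3:ℕ∞) = 2 + 1 := by norm_num
      rw [h3] at hc
      exact (ENat.lt_add_one_iff (by norm_num)).mp hc
    rcases exists_mid_of_edist_le_two hle with heq | hA | ⟨m, hm1, hm2⟩
    · simp only [inr.injEq] at heq
      exact hs heq.symm
    · exact noT _ _ hA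
    · rcases m with x | ss
      · exact disj s3 s (Ne.symm hs) x ⟨hm1, hm2.symm⟩
      · exact noT _ _ hm1
  -- extract length-3 walks
  have extract : ∀ s : Fin 3, s ≠ s3 → ∃ x y : V, H.Adj (inr s3) (inl x) ∧ G.Adj x y ∧
      H.Adj (inl y) (inr s) := by
    intro s hs
    have hd := dist3 s hs
    have hd' : H.edist (inr s3) (inr s) = ((3:ℕ) : ℕ∞) := by exact_mod_cast hd
    obtain ⟨p, hp⟩ := exists_walk_of_edist_eq_coe hd'
    obtain ⟨m1, m2, h1, h2, h3⟩ := walk3_decomp p hp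
    rcases m1 with x1 | ss
    · rcases m2 with y1 | ss
      · exact ⟨x1, y1, h1, (hind x1 y1).mp h2, h3⟩
      · exact absurd h3 (noT _ _)
    · exact absurd h1 (noT _ _)
  obtain ⟨x1, y1, hx1, hxy1, hy1⟩ := extract s1 (Ne.symm h31)
  obtain ⟨x2, y2, hx2, hxy2, hy2⟩ := extract s2 (Ne.symm h32)
  -- the pair (y1, y2)
  have hpair := h4
  have hne_uv : y1 ≠ y2 := by
    rintro rfl
    have : H.edist (inr s1) (inr s2) ≤ 2 :=
      edist_le_two_of_mid hy1.symm hy2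
    have := hpair.trans this
    norm_num at this
  have hnadj_uv : ¬ G.Adj y1 y2 := by
    intro hc
    have : H.edist (inr s1) (inr s2) ≤ 3 := by
      calc H.edist (inr s1) (inr s2) ≤ H.edist (inr s1) (inl y1) + H.edist (inl y1) (inr s2) :=
          SimpleGraph.edist_triangle
        _ ≤ 1 + (1 + 1) := by
            refine add_le_add (le_of_eq (edist_eq_one_iff_adj.mpr hy1.symm)) ?_
            exact edist_le_two_of_mid ((hind y1 y2).mpr hc) hy2
        _ = 3 := by norm_num
    have := hpair.trans this
    norm_num at this
  have hG2 : G.edist y1 y2 = 2 := mk_edist_two hle2 hne_uv hnadj_uv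
  -- G is 2-self-centered
  have h2SC : ∀ z : V, ecc G z = 2 := by
    intro z
    obtain ⟨t, ht⟩ := lb_far hdiam hasc hind z
    obtain ⟨xt, hxt⟩ := A t
    have hnez : z ≠ xt := by
      rintro rfl
      rw [SimpleGraph.edist_comm, edist_eq_one_iff_adj.mpr hxt] at ht
      norm_num at ht
    have hnadjz : ¬ G.Adj z xt := by
      intro hc
      have := ht.trans (edist_le_two_of_mid ((hind z xt).mpr hc) hxt.symm)
      norm_num at this
    exact ecc_G_two hdiam hnez hnadjz
  -- u' and v'
  have hadj_y1x1 : G.Adj y1 x1 := hxy1.symm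
  have hadj_y2x2 : G.Adj y2 x2 := hxy2.symm
  have far_x1 : 3 ≤ H.edist (inl x1) (inr s2) := by
    obtain ⟨t, ht⟩ := lb_far hdiam hasc hind x1
    have cover := fin3_cases s1 s2 s3 hs12 (Ne.symm h31) (Ne.symm h32)
    rcases cover t with rfl | rfl | rfl
    · have := ht.trans (edist_le_two_of_mid ((hind x1 y1).mpr hxy1) hy1); norm_num at this
    · exact ht
    · rw [SimpleGraph.edist_comm, edist_eq_one_iff_adj.mpr hx1] at ht; norm_num at ht
  have far_x2 : 3 ≤ H.edist (inl x2) (inr s1) := by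
    obtain ⟨t, ht⟩ := lb_far hdiam hasc hind x2
    have cover := fin3_cases s1 s2 s3 hs12 (Ne.symm h31) (Ne.symm h32)
    rcases cover t with rfl | rfl | rfl
    · exact ht
    · have := ht.trans (edist_le_two_of_mid ((hind x2 y2).mpr hxy2) hy2); norm_num at this
    · rw [SimpleGraph.edist_comm, edist_eq_one_iff_adj.mpr hx2] at ht; norm_num at ht
  have nadj_y2x1 : ¬ G.Adj y2 x1 := by
    intro hc
    have := far_x1.trans (edist_le_two_of_mid ((hind x1 y2).mpr hc.symm) hy2)
    norm_num at this
  have nadj_y1x2 : ¬ G.Adj y1 x2 := by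
    intro hc
    have := far_x2.trans (edist_le_two_of_mid ((hind x2 y1).mpr hc.symm) hy1)
    norm_num at this
  have hne_x1y2 : x1 ≠ y2 := by
    rintro rfl
    exact hnadj_uv hadj_y1x1
  have hne_x2y1 : x2 ≠ y1 := by
    rintro rfl
    exact hnadj_uv hadj_y2x2.symm
  have ecc_x1 : ecc G x1 = 2 := ecc_G_two hdiam hne_x1y2 (fun hc => nadj_y2x1 hc.symm)
  have ecc_x2 : ecc G x2 = 2 := ecc_G_two hdiam hne_x2y1 (fun hc => nadj_y1x2 hc.symm)
  -- common neighbors of y1, y2 are eccentric for x1 and x2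
  have Wsub : ∀ m : V, G.Adj y1 m → G.Adj y2 m →
      G.edist x1 m = 2 ∧ G.edist x2 m = 2 := by
    intro m hm1 hm2
    have hfarm : 3 ≤ H.edist (inl m) (inr s3) := by
      obtain ⟨t, ht⟩ := lb_far hdiam hasc hind m
      have cover := fin3_cases s1 s2 s3 hs12 (Ne.symm h31) (Ne.symm h32)
      rcases cover t with rfl | rfl | rfl
      · have := ht.trans (edist_le_two_of_mid ((hind m y1).mpr hm1.symm) hy1); norm_num at this
      · have := ht.trans (edist_le_two_of_mid ((hind m y2).mpr hm2.symm) hy2); norm_num at this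
      · exact ht
    constructor
    · refine mk_edist_two hle2 ?_ ?_
      · rintro rfl
        rw [SimpleGraph.edist_comm, edist_eq_one_iff_adj.mpr hx1] at hfarm
        norm_num at hfarm
      · intro hc
        have := hfarm.trans (edist_le_two_of_mid ((hind m x1).mpr hc.symm) hx1.symm)
        norm_num at this
    · refine mk_edist_two hle2 ?_ ?_
      · rintro rfl
        rw [SimpleGraph.edist_comm, edist_eq_one_iff_adj.mpr hx2] at hfarm
        norm_num at hfarm
      · intro hc
        have := hfarm.trans (edist_le_two_of_mid ((hind m x2).mpr hc.symm) hx2.symm)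
        norm_num at this
  refine hnot ⟨h2SC, y1, y2, x1, x2, by rw [hdiam]; exact hG2, ⟨hadj_y1x1, nadj_y2x1⟩,
    ⟨hadj_y2x2, nadj_y1x2⟩, ?_⟩
  rintro m ⟨hm1, hm2⟩
  have ⟨e1, e2⟩ := Wsub m hm1 hm2
  constructor
  · show G.edist x1 m = ecc G x1
    rw [ecc_x1, e1]
  · show G.edist x2 m = ecc G x2
    rw [ecc_x2, e2]
end k3b
end AscPaper

namespace AscPaper
open SimpleGraph Sum
section k3c
variable {V : Type*} [Fintype V] {G : SimpleGraph V} {H : SimpleGraph (V ⊕ Fin 3)}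
variable (hdiam : graphDiam G = 2) (hasc : IsASC 3 H)
    (hind : ∀ x y : V, H.Adj (Sum.inl x) (Sum.inl y) ↔ G.Adj x y)
    (hcond : ∀ u v : V, u ≠ v → ¬ G.Adj u v →
      (∀ x ∈ eccSet G u ∩ eccSet G v,
        ∃ y ∈ eccSet G u ∩ eccSet G v, x ≠ y ∧ G.Adj x y) ∧
      (∀ x ∈ eccSet G u ∩ eccSet G v, ∀ y ∈ eccSet G u ∩ eccSet G v,
        ∀ z ∈ eccSet G u ∩ eccSet G v,
          x ≠ z → G.Adj x y → G.Adj y z → G.Adj x z) ∧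
      (∀ x ∈ eccSet G u ∩ eccSet G v, ∀ w' : V, G.Adj x w' →
        w' ∉ eccSet G u ∩ eccSet G v → w' ∈ G.neighborSet u ∩ G.neighborSet v))

include hdiam hind hcond in
lemma B2_branch (tA tB tC : Fin 3) (hAB : tA ≠ tB) (hAC : tA ≠ tC) (hBC : tB ≠ tC)
    (NC : ¬ ∃ x : V, H.Adj (inr tC) (inl x))
    (hnadjAB : ¬ H.Adj (inr tA) (inr tB))
    (farB : ∀ x : V, H.Adj (inr tA) (inl x) → 3 ≤ H.edist (inl x) (inr tB))
    (y0 : V) (hy0 : H.Adj (inr tB) (inl y0))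
    (q q' : V) (hq1 : 3 ≤ H.edist (inr tA) (inl q))
    (hqy0 : G.edist y0 q = 2)
    (hqq' : G.Adj q q')
    (hq'y0 : G.edist y0 q' = 2)
    (hA2 : H.edist (inr tA) (inl q') ≤ 2)
    (hA2' : ¬ H.Adj (inr tA) (inl q')) : False := by
  have cover := fin3_cases tA tB tC hAB hAC hBC
  -- find x1 attached to tA with x1 ~ q'
  obtain ⟨x1, hx1A, hx1q'⟩ : ∃ x1 : V, H.Adj (inr tA) (inl x1) ∧ G.Adj x1 q' := by
    rcases exists_mid_of_edist_le_two hA2 with heq | hA | ⟨m, hm1, hm2⟩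
    · exact absurd heq (by simp)
    · exact absurd hA hA2'
    · rcases m with x | ss
      · exact ⟨x, hm1, (hind x q').mp hm2⟩
      · exfalso
        rcases cover ss with rfl | rfl | rfl
        · exact H.irrefl hm1
        · exact hnadjAB hm1
        · exact NC ⟨q', hm2⟩
  -- pair (x1, y0)
  have hfarx1 : 3 ≤ H.edist (inl x1) (inr tB) := farB x1 hx1A
  have hne_x1y0 : x1 ≠ y0 := by
    rintro rfl
    rw [SimpleGraph.edist_comm, edist_eq_one_iff_adj.mpr hy0] at hfarx1
    norm_num at hfarx1
  have hnadj_x1y0 : ¬ G.Adj x1 y0 := by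
    intro hc
    have := hfarx1.trans (edist_le_two_of_mid ((hind x1 y0).mpr hc) hy0.symm)
    norm_num at this
  have hecc_x1 : ecc G x1 = 2 := ecc_G_two hdiam hne_x1y0 hnadj_x1y0
  have hecc_y0 : ecc G y0 = 2 := ecc_G_two hdiam (Ne.symm hne_x1y0)
    (fun hc => hnadj_x1y0 hc.symm)
  -- q is in eccSet x1 ∩ eccSet y0
  have hq_x1 : G.edist x1 q = 2 := by
    refine mk_edist_two (hle2_of_diam hdiam) ?_ ?_
    · rintro rfl
      rw [edist_eq_one_iff_adj.mpr hx1A] at hq1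
      norm_num at hq1
    · intro hc
      have : H.edist (inr tA) (inl q) ≤ 2 :=
        edist_le_two_of_mid hx1A ((hind x1 q).mpr hc)
      have := hq1.trans this
      norm_num at this
  have hqS1 : q ∈ eccSet G x1 ∩ eccSet G y0 := by
    constructor
    · show G.edist x1 q = ecc G x1
      rw [hecc_x1, hq_x1]
    · show G.edist y0 q = ecc G y0
      rw [hecc_y0, hqy0]
  have hq'S1 : q' ∉ eccSet G x1 ∩ eccSet G y0 := by
    rintro ⟨h1, -⟩
    have : G.edist x1 q' = ecc G x1 := h1
    rw [hecc_x1, edist_eq_one_iff_adj.mpr hx1q'] at this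
    norm_num at this
  have h3 := (hcond x1 y0 hne_x1y0 hnadj_x1y0).2.2
  have := h3 q hqS1 q' hqq' hq'S1
  have hadj_y0q' : G.Adj y0 q' := this.2
  rw [edist_eq_one_iff_adj.mpr hadj_y0q'] at hq'y0
  norm_num at hq'y0

include hdiam hasc hind hcond in
lemma caseB2 (t1 t2 t3 : Fin 3) (h12 : t1 ≠ t2) (h13 : t1 ≠ t3) (h23 : t2 ≠ t3)
    (A1 : ∃ x, H.Adj (inr t1) (inl x)) (A2 : ∃ x, H.Adj (inr t2) (inl x))
    (N3 : ¬ ∃ x : V, H.Adj (inr t3) (inl x))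
    (h31 : H.Adj (inr t3) (inr t1)) (h32 : H.Adj (inr t3) (inr t2)) : False := by
  have cover := fin3_cases t1 t2 t3 h12 h13 h23
  have hle2 := hle2_of_diam hdiam
  obtain ⟨x0, hx0⟩ := A1
  obtain ⟨y0, hy0⟩ := A2
  -- t1 not adjacent t2
  have hnadj12 : ¬ H.Adj (inr t1) (inr t2) := by
    intro hadj
    obtain ⟨t, ht⟩ := lb_far hdiam hasc hind x0
    rcases cover t with rfl | rfl | rfl
    · rw [SimpleGraph.edist_comm, edist_eq_one_iff_adj.mpr hx0] at ht; norm_num at ht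
    · have := ht.trans (edist_le_two_of_mid hx0.symm hadj); norm_num at this
    · have := ht.trans (edist_le_two_of_mid hx0.symm h31.symm); norm_num at this
  -- vertices attached to t1 are far from t2, and vice versa
  have farB : ∀ x : V, H.Adj (inr t1) (inl x) → 3 ≤ H.edist (inl x) (inr t2) := by
    intro x hx
    obtain ⟨t, ht⟩ := lb_far hdiam hasc hind x
    rcases cover t with rfl | rfl | rfl
    · rw [SimpleGraph.edist_comm, edist_eq_one_iff_adj.mpr hx] at ht; norm_num at ht
    · exact ht
    · have := ht.trans (edist_le_two_of_mid hx.symm h31.symm); norm_num at this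
  have farA : ∀ y : V, H.Adj (inr t2) (inl y) → 3 ≤ H.edist (inl y) (inr t1) := by
    intro y hy
    obtain ⟨t, ht⟩ := lb_far hdiam hasc hind y
    rcases cover t with rfl | rfl | rfl
    · exact ht
    · rw [SimpleGraph.edist_comm, edist_eq_one_iff_adj.mpr hy] at ht; norm_num at ht
    · have := ht.trans (edist_le_two_of_mid hy.symm h32.symm); norm_num at this
  -- find the far pair: it must be (inl q, inr t3)
  obtain ⟨w1, w2, hnew, h4, hcent⟩ := lb_noncentral_pair hasc
  have le3_1 : ∀ w : V ⊕ Fin 3, H.edist (inr t1) w ≤ 3 := by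
    rintro (y | s)
    · calc H.edist (inr t1) (inl y) ≤
          H.edist (inr t1) (inl x0) + H.edist (inl x0) (inl y) := SimpleGraph.edist_triangle
        _ ≤ 1 + 2 := add_le_add (le_of_eq (edist_eq_one_iff_adj.mpr hx0))
            (lb_inl_le2 hdiam hind x0 y)
        _ = 3 := by norm_num
    · rcases cover s with rfl | rfl | rfl
      · simp
      · have := edist_le_two_of_mid h31.symm h32
        exact this.trans (by norm_num)
      · rw [SimpleGraph.edist_comm, edist_eq_one_iff_adj.mpr h31]
        norm_num
  have le3_2 : ∀ w : V ⊕ Fin 3, H.edist (inr t2) w ≤ 3 := by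
    rintro (y | s)
    · calc H.edist (inr t2) (inl y) ≤
          H.edist (inr t2) (inl y0) + H.edist (inl y0) (inl y) := SimpleGraph.edist_triangle
        _ ≤ 1 + 2 := add_le_add (le_of_eq (edist_eq_one_iff_adj.mpr hy0))
            (lb_inl_le2 hdiam hind y0 y)
        _ = 3 := by norm_num
    · rcases cover s with rfl | rfl | rfl
      · have := edist_le_two_of_mid h32.symm h31
        exact this.trans (by norm_num)
      · simp
      · rw [SimpleGraph.edist_comm, edist_eq_one_iff_adj.mpr h32]
        norm_num
  have not12 : ∀ w : V ⊕ Fin 3, w ≠ inr t1 ∧ w ≠ inr t2 ∨ True := fun _ => Or.inr trivial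
  -- w1 and w2 : one is inl q, other is inr t3
  have hclass : ∀ w w' : V ⊕ Fin 3, 4 ≤ H.edist w w' → w = inr t3 ∨ ∃ q : V, w = inl q := by
    intro w w' hw
    rcases w with x | s
    · exact Or.inr ⟨x, rfl⟩
    · rcases cover s with rfl | rfl | rfl
      · exact absurd (hw.trans (le3_1 w')) (by norm_num)
      · exact absurd (hw.trans (le3_2 w')) (by norm_num)
      · exact Or.inl rfl
  -- also t3 is within 1+... of t1: edist (inr t3) w ≤ ?
  -- find q : V with 4 ≤ edist (inr t3) (inl q)
  obtain ⟨q, hq4, hqcent⟩ : ∃ q : V, 4 ≤ H.edist (inr t3) (inl q) ∧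
      (∀ w : V ⊕ Fin 3, w ≠ inl q → w ≠ inr t3 → ecc H w = 3) := by
    rcases hclass w1 w2 h4 with h1eq | ⟨q, hq⟩
    · subst h1eq
      rcases hclass w2 (inr t3) (by rw [SimpleGraph.edist_comm]; exact h4) with h2eq | ⟨q, hq⟩
      · rw [h2eq] at hnew; exact absurd rfl hnew
      · subst hq
        exact ⟨q, h4, fun w hwq hw3 => hcent w hw3 hwq⟩
    · subst hq
      rcases hclass w2 (inl q) (by rw [SimpleGraph.edist_comm]; exact h4) with h2eq | ⟨q', hq'⟩
      · subst h2eq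
        exact ⟨q, by rw [SimpleGraph.edist_comm] at h4; exact h4,
          fun w hwq hw3 => hcent w hwq hw3⟩
      · exfalso
        subst hq'
        have hle' := lb_inl_le2 hdiam hind q q'
        have := h4.trans hle'
        norm_num at this
  -- q is far from t1 and t2
  have hq1 : 3 ≤ H.edist (inr t1) (inl q) := by
    by_contra hc
    push_neg at hc
    have hle : H.edist (inr t1) (inl q) ≤ 2 := by
      have h3 : (3:ℕ∞) = 2 + 1 := by norm_num
      rw [h3] at hc
      exact (ENat.lt_add_one_iff (by norm_num)).mp hc
    have : H.edist (inr t3) (inl q) ≤ 3 := by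
      calc H.edist (inr t3) (inl q) ≤ H.edist (inr t3) (inr t1) + H.edist (inr t1) (inl q) :=
          SimpleGraph.edist_triangle
        _ ≤ 1 + 2 := add_le_add (le_of_eq (edist_eq_one_iff_adj.mpr h31)) hle
        _ = 3 := by norm_num
    have := hq4.trans this
    norm_num at this
  have hq2 : 3 ≤ H.edist (inr t2) (inl q) := by
    by_contra hc
    push_neg at hc
    have hle : H.edist (inr t2) (inl q) ≤ 2 := by
      have h3 : (3:ℕ∞) = 2 + 1 := by norm_num
      rw [h3] at hc
      exact (ENat.lt_add_one_iff (by norm_num)).mp hc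
    have : H.edist (inr t3) (inl q) ≤ 3 := by
      calc H.edist (inr t3) (inl q) ≤ H.edist (inr t3) (inr t2) + H.edist (inr t2) (inl q) :=
          SimpleGraph.edist_triangle
        _ ≤ 1 + 2 := add_le_add (le_of_eq (edist_eq_one_iff_adj.mpr h32)) hle
        _ = 3 := by norm_num
    have := hq4.trans this
    norm_num at this
  -- pair (x0, y0), q in its eccentric intersection
  have hne_xy : x0 ≠ y0 := by
    rintro rfl
    have := farB x0 hx0
    rw [SimpleGraph.edist_comm, edist_eq_one_iff_adj.mpr hy0] at this
    norm_num at this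
  have hnadj_xy : ¬ G.Adj x0 y0 := by
    intro hc
    have := (farB x0 hx0).trans (edist_le_two_of_mid ((hind x0 y0).mpr hc) hy0.symm)
    norm_num at this
  have hecc_x0 : ecc G x0 = 2 := ecc_G_two hdiam hne_xy hnadj_xy
  have hecc_y0 : ecc G y0 = 2 := ecc_G_two hdiam (Ne.symm hne_xy) (fun hc => hnadj_xy hc.symm)
  have hqx0 : G.edist x0 q = 2 := by
    refine mk_edist_two hle2 ?_ ?_
    · rintro rfl
      rw [edist_eq_one_iff_adj.mpr hx0] at hq1
      norm_num at hq1
    · intro hc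
      have := hq1.trans (edist_le_two_of_mid hx0 ((hind x0 q).mpr hc))
      norm_num at this
  have hqy0 : G.edist y0 q = 2 := by
    refine mk_edist_two hle2 ?_ ?_
    · rintro rfl
      rw [edist_eq_one_iff_adj.mpr hy0] at hq2
      norm_num at hq2
    · intro hc
      have := hq2.trans (edist_le_two_of_mid hy0 ((hind y0 q).mpr hc))
      norm_num at this
  have hqS : q ∈ eccSet G x0 ∩ eccSet G y0 := by
    constructor
    · show G.edist x0 q = ecc G x0
      rw [hecc_x0, hqx0]
    · show G.edist y0 q = ecc G y0
      rw [hecc_y0, hqy0]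
  obtain ⟨q', hq'S, hneqq', hadjqq'⟩ := (hcond x0 y0 hne_xy hnadj_xy).1 q hqS
  have hq'x0 : G.edist x0 q' = 2 := by
    have := hq'S.1
    rwa [show (q' ∈ eccSet G x0) = (G.edist x0 q' = ecc G x0) from rfl, hecc_x0] at this
  have hq'y0 : G.edist y0 q' = 2 := by
    have := hq'S.2
    rwa [show (q' ∈ eccSet G y0) = (G.edist y0 q' = ecc G y0) from rfl, hecc_y0] at this
  -- q' is not adjacent to t1 nor t2
  have hq'A1 : ¬ H.Adj (inr t1) (inl q') := by
    intro hc
    have : H.edist (inr t1) (inl q) ≤ 2 :=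
      edist_le_two_of_mid hc ((hind q' q).mpr hadjqq'.symm)
    have := hq1.trans this
    norm_num at this
  have hq'A2 : ¬ H.Adj (inr t2) (inl q') := by
    intro hc
    have : H.edist (inr t2) (inl q) ≤ 2 :=
      edist_le_two_of_mid hc ((hind q' q).mpr hadjqq'.symm)
    have := hq2.trans this
    norm_num at this
  -- q' cannot be far from both t1 and t2
  have hmin : H.edist (inr t1) (inl q') ≤ 2 ∨ H.edist (inr t2) (inl q') ≤ 2 := by
    by_contra hc
    push_neg at hc
    obtain ⟨hc1, hc2⟩ := hc
    have hf1 : 3 ≤ H.edist (inr t1) (inl q') := by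
      have h3 : (3:ℕ∞) = 2 + 1 := by norm_num
      rw [h3]
      exact (ENat.add_one_le_iff (by norm_num)).mpr hc1
    have hf2 : 3 ≤ H.edist (inr t2) (inl q') := by
      have h3 : (3:ℕ∞) = 2 + 1 := by norm_num
      rw [h3]
      exact (ENat.add_one_le_iff (by norm_num)).mpr hc2
    have hbig : (4:ℕ∞) ≤ H.edist (inr t3) (inl q') := by
      have h43 : (4:ℕ∞) = 3 + 1 := by norm_num
      rw [h43]
      refine succ_le_edist_of_forall (by simp) ?_
      rintro (w | s) hm
      · exact absurd ⟨w, hm⟩ N3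
      · rcases cover s with rfl | rfl | rfl
        · exact hf1
        · exact hf2
        · exact absurd hm H.irrefl
    have : ecc H (inl q') = 3 := by
      refine hqcent (inl q') ?_ (by simp)
      simp only [ne_eq, inl.injEq]
      exact fun hc' => hneqq' hc'.symm
    have hle3 : H.edist (inr t3) (inl q') ≤ 3 := by
      rw [SimpleGraph.edist_comm]
      exact this ▸ ecc_ge_edist (H := H) (inl q') (inr t3)
    have := hbig.trans hle3
    norm_num at this
  rcases hmin with hle | hle
  · exact B2_branch hdiam hind hcond t1 t2 t3 h12 h13 h23 N3 hnadj12 farB y0 hy0 q q'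
      hq1 hqy0 hadjqq' hq'y0 hle hq'A1
  · exact B2_branch hdiam hind hcond t2 t1 t3 (Ne.symm h12) h23 h13 N3
      (fun hc => hnadj12 hc.symm) farA x0 hx0 q q' hq2 hqx0 hadjqq' hq'x0 hle hq'A2
end k3c
end AscPaper

namespace AscPaper
open SimpleGraph Sum
section k3d
variable {V : Type*} [Fintype V] {G : SimpleGraph V} {H : SimpleGraph (V ⊕ Fin 3)}
variable (hdiam : graphDiam G = 2) (hasc : IsASC 3 H)
    (hind : ∀ x y : V, H.Adj (Sum.inl x) (Sum.inl y) ↔ G.Adj x y)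

include hdiam hasc hind in
lemma caseB1 (t1 t2 t3 : Fin 3) (h12 : t1 ≠ t2) (h13 : t1 ≠ t3) (h23 : t2 ≠ t3)
    (A1 : ∃ x, H.Adj (inr t1) (inl x))
    (N3 : ¬ ∃ x : V, H.Adj (inr t3) (inl x))
    (h31 : H.Adj (inr t3) (inr t1)) (hn32 : ¬ H.Adj (inr t3) (inr t2)) : False := by
  have cover := fin3_cases t1 t2 t3 h12 h13 h23
  obtain ⟨x0, hx0⟩ := A1
  have hnadj12 : ¬ H.Adj (inr t1) (inr t2) := by
    intro hadj
    obtain ⟨t, ht⟩ := lb_far hdiam hasc hind x0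
    rcases cover t with rfl | rfl | rfl
    · rw [SimpleGraph.edist_comm, edist_eq_one_iff_adj.mpr hx0] at ht; norm_num at ht
    · have := ht.trans (edist_le_two_of_mid hx0.symm hadj); norm_num at this
    · have := ht.trans (edist_le_two_of_mid hx0.symm h31.symm); norm_num at this
  have farB : ∀ x : V, H.Adj (inr t1) (inl x) → 3 ≤ H.edist (inl x) (inr t2) := by
    intro x hx
    obtain ⟨t, ht⟩ := lb_far hdiam hasc hind x
    rcases cover t with rfl | rfl | rfl
    · rw [SimpleGraph.edist_comm, edist_eq_one_iff_adj.mpr hx] at ht; norm_num at ht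
    · exact ht
    · have := ht.trans (edist_le_two_of_mid hx.symm h31.symm); norm_num at this
  have d12ge2 : (2:ℕ∞) ≤ H.edist (inr t1) (inr t2) :=
    enat_two_le (by simp [h12]) (by simp [hnadj12])
  have d32ge3 : (3:ℕ∞) ≤ H.edist (inr t3) (inr t2) := by
    have h3 : (3:ℕ∞) = 2 + 1 := by norm_num
    rw [h3]
    refine succ_le_edist_of_forall (by simp [Ne.symm h23]) ?_
    rintro (w | s) hm
    · exact absurd ⟨w, hm⟩ N3
    · rcases cover s with rfl | rfl | rfl
      · exact d12ge2
      · exact absurd hm hn32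
      · exact absurd hm H.irrefl
  have d12ge4 : (4:ℕ∞) ≤ H.edist (inr t1) (inr t2) := by
    have h4 : (4:ℕ∞) = 3 + 1 := by norm_num
    rw [h4]
    refine succ_le_edist_of_forall (by simp [h12]) ?_
    rintro (w | s) hm
    · exact farB w hm
    · rcases cover s with rfl | rfl | rfl
      · exact absurd hm H.irrefl
      · exact absurd hm hnadj12
      · exact d32ge3
  have d32ge4 : (4:ℕ∞) ≤ H.edist (inr t3) (inr t2) := by
    have h4 : (4:ℕ∞) = 3 + 1 := by norm_num
    rw [h4]
    refine succ_le_edist_of_forall (by simp [Ne.symm h23]) ?_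
    rintro (w | s) hm
    · exact absurd ⟨w, hm⟩ N3
    · rcases cover s with rfl | rfl | rfl
      · exact (by norm_num : (3:ℕ∞) ≤ 4).trans d12ge4
      · exact absurd hm hn32
      · exact absurd hm H.irrefl
  refine three_noncentral hasc (z1 := inr t1) (z2 := inr t2) (z3 := inr t3)
    (by simp [h12]) (by simp [h13]) (by simp [h23]) ?_ ?_ ?_
  · exact d12ge4.trans (ecc_ge_edist _ _)
  · rw [SimpleGraph.edist_comm] at d12ge4
    exact d12ge4.trans (ecc_ge_edist _ _)
  · exact d32ge4.trans (ecc_ge_edist _ _)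

include hdiam hasc hind in
lemma case_path (t1 t2 t3 : Fin 3) (h12 : t1 ≠ t2) (h13 : t1 ≠ t3) (h23 : t2 ≠ t3)
    (A1 : ∃ x, H.Adj (inr t1) (inl x))
    (N2 : ¬ ∃ x : V, H.Adj (inr t2) (inl x))
    (N3 : ¬ ∃ x : V, H.Adj (inr t3) (inl x))
    (h12a : H.Adj (inr t1) (inr t2)) (h23a : H.Adj (inr t2) (inr t3))
    (hn13 : ¬ H.Adj (inr t1) (inr t3)) : False := by
  have cover := fin3_cases t1 t2 t3 h12 h13 h23
  have hle2 := hle2_of_diam hdiam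
  have p1 : ∀ x : V, ¬ H.Adj (inr t1) (inl x) → 3 ≤ H.edist (inr t2) (inl x) := by
    intro x hx
    by_contra hc
    push_neg at hc
    have hle : H.edist (inr t2) (inl x) ≤ 2 := by
      have h3 : (3:ℕ∞) = 2 + 1 := by norm_num
      rw [h3] at hc
      exact (ENat.lt_add_one_iff (by norm_num)).mp hc
    rcases exists_mid_of_edist_le_two hle with heq | hA | ⟨m, hm1, hm2⟩
    · exact absurd heq (by simp)
    · exact N2 ⟨x, hA⟩
    · rcases m with y | s
      · exact N2 ⟨y, hm1⟩
      · rcases cover s with rfl | rfl | rfl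
        · exact hx hm2
        · exact H.irrefl hm1
        · exact N3 ⟨x, hm2⟩
  have p2 : ∀ x : V, ¬ H.Adj (inr t1) (inl x) → 4 ≤ H.edist (inr t3) (inl x) := by
    intro x hx
    have h4 : (4:ℕ∞) = 3 + 1 := by norm_num
    rw [h4]
    refine succ_le_edist_of_forall (by simp) ?_
    rintro (w | s) hm
    · exact absurd ⟨w, hm⟩ N3
    · rcases cover s with rfl | rfl | rfl
      · exact absurd hm.symm hn13
      · exact p1 x hx
      · exact absurd hm H.irrefl
  obtain ⟨x0, hx0far⟩ : ∃ x0 : V, 3 ≤ H.edist (inr t1) (inl x0) := by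
    obtain ⟨w, hw⟩ := ge3_vertex (lb_ecc_ge3 hasc (inr t1))
    rcases w with x | s
    · exact ⟨x, hw⟩
    · exfalso
      rcases cover s with rfl | rfl | rfl
      · rw [edist_self] at hw; norm_num at hw
      · rw [edist_eq_one_iff_adj.mpr h12a] at hw; norm_num at hw
      · have := hw.trans (edist_le_two_of_mid h12a h23a); norm_num at this
  have hn1x0 : ¬ H.Adj (inr t1) (inl x0) := by
    intro hc
    rw [edist_eq_one_iff_adj.mpr hc] at hx0far
    norm_num at hx0far
  have hx0big : 4 ≤ H.edist (inr t3) (inl x0) := p2 x0 hn1x0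
  obtain ⟨xs, hxs⟩ := A1
  have hne0s : x0 ≠ xs := by
    rintro rfl
    rw [edist_eq_one_iff_adj.mpr hxs] at hx0far
    norm_num at hx0far
  have hnadj0s : ¬ G.Adj x0 xs := by
    intro hc
    have := hx0far.trans (edist_le_two_of_mid hxs ((hind xs x0).mpr hc.symm))
    norm_num at this
  obtain ⟨m, hm1, hm2⟩ := Gmid hle2 hne0s hnadj0s
  have hn1m : ¬ H.Adj (inr t1) (inl m) := by
    intro hc
    have := hx0far.trans (edist_le_two_of_mid hc ((hind m x0).mpr hm1.symm))
    norm_num at this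
  have hmbig : 4 ≤ H.edist (inr t3) (inl m) := p2 m hn1m
  refine three_noncentral hasc (z1 := inl x0) (z2 := inl m) (z3 := inr t3)
    (by simp [hm1.ne]) (by simp) (by simp) ?_ ?_ ?_
  · rw [SimpleGraph.edist_comm] at hx0big
    exact hx0big.trans (ecc_ge_edist _ _)
  · rw [SimpleGraph.edist_comm] at hmbig
    exact hmbig.trans (ecc_ge_edist _ _)
  · exact hx0big.trans (ecc_ge_edist _ _)

include hdiam hasc hind in
lemma case1Att (t1 t2 t3 : Fin 3) (h12 : t1 ≠ t2) (h13 : t1 ≠ t3) (h23 : t2 ≠ t3)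
    (A1 : ∃ x, H.Adj (inr t1) (inl x))
    (N2 : ¬ ∃ x : V, H.Adj (inr t2) (inl x))
    (N3 : ¬ ∃ x : V, H.Adj (inr t3) (inl x)) : False := by
  have cover := fin3_cases t1 t2 t3 h12 h13 h23
  obtain ⟨x0, hx0⟩ := A1
  obtain ⟨x₀⟩ := lb_nonempty hdiam
  by_cases h23a : H.Adj (inr t2) (inr t3)
  · by_cases h12a : H.Adj (inr t1) (inr t2)
    · by_cases h13a : H.Adj (inr t1) (inr t3)
      · -- triangle
        obtain ⟨t, ht⟩ := lb_far hdiam hasc hind x0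
        rcases cover t with rfl | rfl | rfl
        · rw [SimpleGraph.edist_comm, edist_eq_one_iff_adj.mpr hx0] at ht; norm_num at ht
        · have := ht.trans (edist_le_two_of_mid hx0.symm h12a); norm_num at this
        · have := ht.trans (edist_le_two_of_mid hx0.symm h13a); norm_num at this
      · exact case_path hdiam hasc hind t1 t2 t3 h12 h13 h23 ⟨x0, hx0⟩ N2 N3 h12a h23a h13a
    · by_cases h13a : H.Adj (inr t1) (inr t3)
      · exact case_path hdiam hasc hind t1 t3 t2 h13 h12 (Ne.symm h23) ⟨x0, hx0⟩ N3 N2 h13a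
          h23a.symm h12a
      · -- t1 disconnected from {t2, t3}
        have hclosed : ∀ z w : V ⊕ Fin 3, z ∈ ({inr t2, inr t3} : Set (V ⊕ Fin 3)) →
            H.Adj z w → w ∈ ({inr t2, inr t3} : Set (V ⊕ Fin 3)) := by
          rintro z w (rfl | rfl) hadj
          · rcases w with y | s
            · exact absurd ⟨y, hadj⟩ N2
            · rcases cover s with rfl | rfl | rfl
              · exact absurd hadj.symm h12a
              · exact absurd hadj H.irrefl
              · exact Or.inr rfl
          · rcases w with y | s
            · exact absurd ⟨y, hadj⟩ N3
            · rcases cover s with rfl | rfl | rfl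
              · exact absurd hadj.symm h13a
              · exact Or.inl rfl
              · exact absurd hadj H.irrefl
        have := reach_closed hclosed (hasc.1 (inr t2) (inl x₀)) (Or.inl rfl)
        rcases this with h | h <;> simp at h
  · -- t2 and t3 must both attach to t1
    have h21 : H.Adj (inr t2) (inr t1) := by
      obtain ⟨w, hw⟩ := lb_neighbor hasc x₀ t2
      rcases w with y | s
      · exact absurd ⟨y, hw⟩ N2
      · rcases cover s with rfl | rfl | rfl
        · exact hw
        · exact absurd hw H.irrefl
        · exact absurd hw h23a
    have h31 : H.Adj (inr t3) (inr t1) := by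
      obtain ⟨w, hw⟩ := lb_neighbor hasc x₀ t3
      rcases w with y | s
      · exact absurd ⟨y, hw⟩ N3
      · rcases cover s with rfl | rfl | rfl
        · exact hw
        · exact absurd hw (fun hc => h23a hc.symm)
        · exact absurd hw H.irrefl
    obtain ⟨t, ht⟩ := lb_far hdiam hasc hind x0
    rcases cover t with rfl | rfl | rfl
    · rw [SimpleGraph.edist_comm, edist_eq_one_iff_adj.mpr hx0] at ht; norm_num at ht
    · have := ht.trans (edist_le_two_of_mid hx0.symm h21.symm); norm_num at this
    · have := ht.trans (edist_le_two_of_mid hx0.symm h31.symm); norm_num at this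

include hdiam hasc in
lemma case0Att (N : ∀ t : Fin 3, ¬ ∃ x : V, H.Adj (inr t) (inl x)) : False := by
  obtain ⟨x₀⟩ := lb_nonempty hdiam
  have hclosed : ∀ z w : V ⊕ Fin 3, z ∈ (Set.range inr : Set (V ⊕ Fin 3)) →
      H.Adj z w → w ∈ Set.range inr := by
    rintro z w ⟨t, rfl⟩ hadj
    rcases w with y | s
    · exact absurd ⟨y, hadj⟩ (N t)
    · exact ⟨s, rfl⟩
  obtain ⟨t, ht⟩ := reach_closed hclosed (hasc.1 (inr 0) (inl x₀)) ⟨0, rfl⟩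
  exact absurd ht (by simp)
end k3d
end AscPaper

namespace AscPaper
open SimpleGraph Sum
section k3e
variable {V : Type*} [Fintype V] {G : SimpleGraph V} {H : SimpleGraph (V ⊕ Fin 3)}
variable (hdiam : graphDiam G = 2) (hasc : IsASC 3 H)
    (hind : ∀ x y : V, H.Adj (Sum.inl x) (Sum.inl y) ↔ G.Adj x y)
    (hcond : ∀ u v : V, u ≠ v → ¬ G.Adj u v →
      (∀ x ∈ eccSet G u ∩ eccSet G v,
        ∃ y ∈ eccSet G u ∩ eccSet G v, x ≠ y ∧ G.Adj x y) ∧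
      (∀ x ∈ eccSet G u ∩ eccSet G v, ∀ y ∈ eccSet G u ∩ eccSet G v,
        ∀ z ∈ eccSet G u ∩ eccSet G v,
          x ≠ z → G.Adj x y → G.Adj y z → G.Adj x z) ∧
      (∀ x ∈ eccSet G u ∩ eccSet G v, ∀ w' : V, G.Adj x w' →
        w' ∉ eccSet G u ∩ eccSet G v → w' ∈ G.neighborSet u ∩ G.neighborSet v))
    (hnot : ¬ NewAddedHyp G)

include hdiam hasc hind hcond in
lemma case2Att (t1 t2 t3 : Fin 3) (h12 : t1 ≠ t2) (h13 : t1 ≠ t3) (h23 : t2 ≠ t3)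
    (A1 : ∃ x, H.Adj (inr t1) (inl x)) (A2 : ∃ x, H.Adj (inr t2) (inl x))
    (N3 : ¬ ∃ x : V, H.Adj (inr t3) (inl x)) : False := by
  obtain ⟨x₀⟩ := lb_nonempty hdiam
  have cover := fin3_cases t1 t2 t3 h12 h13 h23
  by_cases c1 : H.Adj (inr t3) (inr t1)
  · by_cases c2 : H.Adj (inr t3) (inr t2)
    · exact caseB2 hdiam hasc hind hcond t1 t2 t3 h12 h13 h23 A1 A2 N3 c1 c2
    · exact caseB1 hdiam hasc hind t1 t2 t3 h12 h13 h23 A1 N3 c1 c2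
  · by_cases c2 : H.Adj (inr t3) (inr t2)
    · exact caseB1 hdiam hasc hind t2 t1 t3 (Ne.symm h12) h23 h13 A2 N3 c2 c1
    · obtain ⟨w, hw⟩ := lb_neighbor hasc x₀ t3
      rcases w with y | s
      · exact N3 ⟨y, hw⟩
      · rcases cover s with rfl | rfl | rfl
        · exact c1 hw
        · exact c2 hw
        · exact H.irrefl hw

include hdiam hasc hind hcond hnot in
lemma k3_impossible : False := by
  have d01 : (0 : Fin 3) ≠ 1 := by decide
  have d02 : (0 : Fin 3) ≠ 2 := by decide
  have d12 : (1 : Fin 3) ≠ 2 := by decide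
  by_cases A0 : ∃ x : V, H.Adj (inr 0) (inl x) <;>
  by_cases A1 : ∃ x : V, H.Adj (inr 1) (inl x) <;>
  by_cases A2 : ∃ x : V, H.Adj (inr 2) (inl x)
  · -- all attached
    have AttAll : ∀ t : Fin 3, ∃ x : V, H.Adj (inr t) (inl x) := by
      intro t
      have : t = 0 ∨ t = 1 ∨ t = 2 := by omega
      rcases this with rfl | rfl | rfl <;> assumption
    by_cases hTE : ∃ s s' : Fin 3, H.Adj (inr s) (inr s')
    · obtain ⟨s, s', hss⟩ := hTE
      have hne : s ≠ s' := by
        rintro rfl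
        exact H.irrefl hss
      obtain ⟨s3, h3s, h3s'⟩ := fin3_third s s' hne
      exact caseA_edge hdiam hasc hind s s' s3 hne (Ne.symm h3s) (Ne.symm h3s')
        (AttAll s) (AttAll s') (AttAll s3) hss
    · push_neg at hTE
      exact caseA_indep hdiam hasc hind hnot AttAll hTE
  · exact case2Att hdiam hasc hind hcond 0 1 2 d01 d02 d12 A0 A1 A2
  · exact case2Att hdiam hasc hind hcond 0 2 1 d02 d01 (Ne.symm d12) A0 A2 A1
  · exact case1Att hdiam hasc hind 0 1 2 d01 d02 d12 A0 A1 A2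
  · exact case2Att hdiam hasc hind hcond 1 2 0 d12 (Ne.symm d01) (Ne.symm d02) A1 A2 A0
  · exact case1Att hdiam hasc hind 1 0 2 (Ne.symm d01) d12 d02 A1 A0 A2
  · exact case1Att hdiam hasc hind 2 0 1 (Ne.symm d02) (Ne.symm d12) d01 A2 A0 A1
  · refine case0Att hdiam hasc ?_
    intro t
    have : t = 0 ∨ t = 1 ∨ t = 2 := by omega
    rcases this with rfl | rfl | rfl <;> assumption
end k3e


/-- Suppose `G` has diameter 2 and for every pair of distinct non-adjacent vertices
`u, v`, the subgraph induced by `S = Ecc(u) ∩ Ecc(v)` is a disjoint union of complete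
graphs each on at least two vertices (every vertex of `S` has a neighbor in `S`, and
adjacency within `S` is transitive), such that every neighbor outside `S` of a vertex
of `S` belongs to `N(u) ∩ N(v)`. If moreover `G` does not satisfy the hypothesis of
the 2-SC theorem, then `θ_3(G) = 4`. -/
theorem theta_three_of_union_of_complete {V : Type*} [Fintype V] (G : SimpleGraph V)
    (hdiam : graphDiam G = 2)
    (hcond : ∀ u v : V, u ≠ v → ¬ G.Adj u v →
      (∀ x ∈ eccSet G u ∩ eccSet G v,
        ∃ y ∈ eccSet G u ∩ eccSet G v, x ≠ y ∧ G.Adj x y) ∧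
      (∀ x ∈ eccSet G u ∩ eccSet G v, ∀ y ∈ eccSet G u ∩ eccSet G v,
        ∀ z ∈ eccSet G u ∩ eccSet G v,
          x ≠ z → G.Adj x y → G.Adj y z → G.Adj x z) ∧
      (∀ x ∈ eccSet G u ∩ eccSet G v, ∀ w' : V, G.Adj x w' →
        w' ∉ eccSet G u ∩ eccSet G v → w' ∈ G.neighborSet u ∩ G.neighborSet v))
    (hnot : ¬ NewAddedHyp G) :
    theta 3 G = 4 := by
  have h4m := four_mem hdiam
  refine le_antisymm (Nat.sInf_le h4m) (le_csInf ⟨4, h4m⟩ ?_)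
  rintro k ⟨H, hasc, hind⟩
  by_contra hlt
  push_neg at hlt
  interval_cases k
  · exact k0_impossible hdiam hasc hind rfl
  · exact k1_impossible hdiam hasc hind rfl
  · exact k2_impossible hdiam hasc hind rfl
  · exact k3_impossible hdiam hasc hind hcond hnot

end AscPaper
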